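/- Assume fixed recourse (B^i = 0 for all i ∈ [n_ξ]) and let ω := max_{x∈X} rank(A(x)), where A(x) is the m×n_ξ matrix with columns A^i x − H_i; note ω ≤ min{m, n_ξ}. Then for every x ∈ X feasible for 2RO-C there exist at most Σ_{i=0}^{ω} C(η, i) convex recourse-stable regions whose closures cover U, and consequently k ≥ min{|Y|, (n_ξ+1)·Σ_{i=0}^{ω} C(η, i)} policies suffice for the k-adaptability problem to have the same optimal value and the same optimal first-stage solutions as the two-stage robust problem; if moreover g does not depend on ξ, then k ≥ min{|Y|, Σ_{i=0}^{ω} C(η, i)} suffices. -/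

import Mathlib

noncomputable section

/-- Worst-case value `sup_{ξ ∈ U} min_{y ∈ S} F(y, ξ)` with values in `ℝ ∪ {±∞}`. -/
def worstValE {Eξ Ey : Type*} (U : Set Eξ) (S : Set Ey)
    (F : Ey → Eξ → EReal) : EReal :=
  ⨆ ξ ∈ U, ⨅ y ∈ S, F y ξ

/-- The `k`-adaptability value for a fixed first stage. -/
def kValE {Eξ Ey : Type*} (U : Set Eξ) (S : Set Ey)
    (F : Ey → Eξ → EReal) (k : ℕ) : EReal :=
  ⨅ y ∈ {y : Fin k → Ey | ∀ i, y i ∈ S}, worstValE U (Set.range y) F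

variable {nx ny nξ m : ℕ}

/-- Feasibility of `(x,y)` under scenario `ξ` for the fixed-recourse constraint system
`A(ξ)x + By ≥ h(ξ)` with `h(ξ) = h + Hξ`, `A(ξ) = A + Σᵢ Aⁱξᵢ`. -/
def FeasS (hv : Fin m → ℤ) (H : Matrix (Fin m) (Fin nξ) ℤ)
    (A0 : Matrix (Fin m) (Fin nx) ℤ) (Ai : Fin nξ → Matrix (Fin m) (Fin nx) ℤ)
    (B0 : Matrix (Fin m) (Fin ny) ℤ)
    (x : Fin nx → ℝ) (y : Fin ny → ℝ) (ξ : Fin nξ → ℝ) : Prop :=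
  ∀ l, (hv l : ℝ) + ∑ i, (H l i : ℝ) * ξ i ≤
    (∑ j, ((A0 l j : ℝ) + ∑ i, ξ i * (Ai i l j : ℝ)) * x j) +
    ∑ j, (B0 l j : ℝ) * y j

open Classical in
/-- `f(x,y,ξ) = g(x,y,ξ)` if the constraints hold and `+∞` otherwise. -/
def fES (g : (Fin nx → ℝ) → (Fin ny → ℝ) → (Fin nξ → ℝ) → ℝ)
    (hv : Fin m → ℤ) (H : Matrix (Fin m) (Fin nξ) ℤ)
    (A0 : Matrix (Fin m) (Fin nx) ℤ) (Ai : Fin nξ → Matrix (Fin m) (Fin nx) ℤ)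
    (B0 : Matrix (Fin m) (Fin ny) ℤ)
    (x : Fin nx → ℝ) (y : Fin ny → ℝ) (ξ : Fin nξ → ℝ) : EReal :=
  if FeasS hv H A0 Ai B0 x y ξ then ((g x y ξ : ℝ) : EReal) else ⊤

/-- `x` is feasible for the two-stage robust problem. -/
def Feasible2RO (hv : Fin m → ℤ) (H : Matrix (Fin m) (Fin nξ) ℤ)
    (A0 : Matrix (Fin m) (Fin nx) ℤ) (Ai : Fin nξ → Matrix (Fin m) (Fin nx) ℤ)
    (B0 : Matrix (Fin m) (Fin ny) ℤ)
    (Yx : (Fin nx → ℝ) → Set (Fin ny → ℝ)) (U : Set (Fin nξ → ℝ))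
    (x : Fin nx → ℝ) : Prop :=
  ∀ ξ ∈ U, ∃ y ∈ Yx x, FeasS hv H A0 Ai B0 x y ξ

/-- A convex set `D` is recourse-stable for `x`. -/
def RecourseStableS (hv : Fin m → ℤ) (H : Matrix (Fin m) (Fin nξ) ℤ)
    (A0 : Matrix (Fin m) (Fin nx) ℤ) (Ai : Fin nξ → Matrix (Fin m) (Fin nx) ℤ)
    (B0 : Matrix (Fin m) (Fin ny) ℤ)
    (Yx : (Fin nx → ℝ) → Set (Fin ny → ℝ))
    (x : Fin nx → ℝ) (D : Set (Fin nξ → ℝ)) : Prop :=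
  ∀ y ∈ Yx x, (∀ ξ ∈ D, FeasS hv H A0 Ai B0 x y ξ) ∨
    (∀ ξ ∈ D, ¬ FeasS hv H A0 Ai B0 x y ξ)

/-- Coefficient vector `a_l(x,y)` of `ξ` in row `l` (fixed recourse). -/
def rowCoef (H : Matrix (Fin m) (Fin nξ) ℤ) (Ai : Fin nξ → Matrix (Fin m) (Fin nx) ℤ)
    (x : Fin nx → ℝ) (l : Fin m) : Fin nξ → ℝ :=
  fun i => (∑ j, (Ai i l j : ℝ) * x j) - (H l i : ℝ)

/-- The matrix `A(x)` with columns `Aⁱx − Hᵢ`. -/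
def matA (H : Matrix (Fin m) (Fin nξ) ℤ) (Ai : Fin nξ → Matrix (Fin m) (Fin nx) ℤ)
    (x : Fin nx → ℝ) : Matrix (Fin m) (Fin nξ) ℝ :=
  Matrix.of fun l i => (∑ j, (Ai i l j : ℝ) * x j) - (H l i : ℝ)

/-- Right-hand side `h_l(x,y)` of row `l`. -/
def rowRhs (hv : Fin m → ℤ) (A0 : Matrix (Fin m) (Fin nx) ℤ)
    (B0 : Matrix (Fin m) (Fin ny) ℤ)
    (x : Fin nx → ℝ) (y : Fin ny → ℝ) (l : Fin m) : ℝ :=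
  (hv l : ℝ) - (∑ j, (A0 l j : ℝ) * x j) - ∑ j, (B0 l j : ℝ) * y j

/-- The set `H(x)` of hyperplanes with nonzero normal that intersect `U`. -/
def HypSet (hv : Fin m → ℤ) (H : Matrix (Fin m) (Fin nξ) ℤ)
    (A0 : Matrix (Fin m) (Fin nx) ℤ) (Ai : Fin nξ → Matrix (Fin m) (Fin nx) ℤ)
    (B0 : Matrix (Fin m) (Fin ny) ℤ)
    (Yx : (Fin nx → ℝ) → Set (Fin ny → ℝ)) (U : Set (Fin nξ → ℝ))
    (x : Fin nx → ℝ) : Set (Set (Fin nξ → ℝ)) :=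
  {P | ∃ y ∈ Yx x, ∃ l : Fin m, rowCoef H Ai x l ≠ 0 ∧
    P = {ξ | ∑ i, rowCoef H Ai x l i * ξ i = rowRhs hv A0 B0 x y l} ∧
    (P ∩ U).Nonempty}

end

open Module Submodule Finset

/-- `fB n r = ∑_{i=0}^{r} C(n,i)`. -/
def fB (n r : ℕ) : ℕ := ∑ i ∈ Finset.range (r+1), n.choose i

lemma fB_pascal (n r : ℕ) : fB (n+1) (r+1) = fB n (r+1) + fB n r := by
  unfold fB
  rw [Finset.sum_range_succ' (fun i => (n+1).choose i),
    Finset.sum_range_succ' (fun i => n.choose i)]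
  simp only [Nat.choose_succ_succ, Nat.choose_zero_right]
  rw [Finset.sum_add_distrib]
  ring

lemma fB_mono_left {n n' : ℕ} (r : ℕ) (h : n ≤ n') : fB n r ≤ fB n' r :=
  Finset.sum_le_sum fun i _ => Nat.choose_le_choose i h

lemma eq_decide_true {P : Prop} [Decidable P] {b : Bool} (h : b = decide P) (hb : b = true) :
    P := by
  rw [hb] at h; exact of_decide_eq_true h.symm

lemma eq_decide_false {P : Prop} [Decidable P] {b : Bool} (h : b = decide P) (hb : b = false) :
    ¬P := by
  rw [hb] at h; exact of_decide_eq_false h.symm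

variable {E : Type*} [AddCommGroup E] [Module ℝ E] [FiniteDimensional ℝ E]
variable {ι : Type*}

/-- The set of sign vectors over `T` realized by points of the affine subspace `p + V`. -/
def sgnSet (a : ι → (E →ₗ[ℝ] ℝ)) (c : ι → ℝ) (T : Finset ι) (V : Submodule ℝ E) (p : E) :
    Set (ι → Bool) :=
  {σ | (∀ j, j ∉ T → σ j = false) ∧
    ∃ v ∈ V, ∀ j ∈ T, a j (p + v) ≠ c j ∧ σ j = decide (c j < a j (p + v))}

lemma sgnSet_finite (a : ι → (E →ₗ[ℝ] ℝ)) (c : ι → ℝ) (T : Finset ι) (V : Submodule ℝ E)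
    (p : E) : (sgnSet a c T V p).Finite := by
  classical
  have h : Set.InjOn (fun (σ : ι → Bool) => (fun j : T => σ j)) (sgnSet a c T V p) := by
    intro σ₁ h₁ σ₂ h₂ he
    funext j
    by_cases hj : j ∈ T
    · exact congrFun he ⟨j, hj⟩
    · rw [h₁.1 j hj, h₂.1 j hj]
  have : ((fun (σ : ι → Bool) => (fun j : T => σ j)) '' (sgnSet a c T V p)).Finite :=
    Set.toFinite _
  exact Set.Finite.of_finite_image this h

set_option maxHeartbeats 2000000 in
lemma sgnSet_card (a : ι → (E →ₗ[ℝ] ℝ)) (c : ι → ℝ) :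
    ∀ (T : Finset ι) (V : Submodule ℝ E) (p : E) (r : ℕ),
      finrank ℝ (span ℝ ((fun j => (a j).comp V.subtype) '' T)) ≤ r →
      (sgnSet a c T V p).ncard ≤ fB T.card r := by
  classical
  intro T
  induction T using Finset.induction with
  | empty =>
    intro V p r _
    have : sgnSet a c (∅ : Finset ι) V p ⊆ {fun _ => false} := by
      intro σ hσ
      simp only [Set.mem_singleton_iff]
      funext j
      exact hσ.1 j (Finset.notMem_empty j)
    calc (sgnSet a c ∅ V p).ncard ≤ ({fun _ => false} : Set (ι → Bool)).ncard :=
          Set.ncard_le_ncard this (Set.finite_singleton _)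
      _ = 1 := Set.ncard_singleton _
      _ ≤ fB 0 r := by
          unfold fB
          rw [Finset.sum_range_succ']
          simp
  | @insert j₀ T' hj₀ IH =>
    intro V p r hrank
    have hTcard : (insert j₀ T').card = T'.card + 1 := Finset.card_insert_of_notMem hj₀
    -- rank over T' is at most r
    have hrank' : finrank ℝ (span ℝ ((fun j => (a j).comp V.subtype) '' T')) ≤ r := by
      refine le_trans (finrank_mono (span_mono (Set.image_mono ?_))) hrank
      intro z hz; exact Finset.mem_insert_of_mem hz
    have hfinT' := sgnSet_finite a c T' V p
    have hfin := sgnSet_finite a c (insert j₀ T') V p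
    set Φ : (ι → Bool) → (ι → Bool) := fun σ => Function.update σ j₀ false with hΦ
    have hΦmem : ∀ σ ∈ sgnSet a c (insert j₀ T') V p, Φ σ ∈ sgnSet a c T' V p := by
      intro σ hσ
      obtain ⟨hout, v, hv, hsgn⟩ := hσ
      refine ⟨?_, v, hv, ?_⟩
      · intro j hj
        by_cases hjj : j = j₀
        · subst hjj; simp [Φ]
        · have : j ∉ insert j₀ T' := by
            simp only [Finset.mem_insert, not_or]; exact ⟨hjj, hj⟩
          simpa [Φ, Function.update_of_ne hjj] using hout j this
      · intro j hj
        have hjj : j ≠ j₀ := fun h => hj₀ (h ▸ hj)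
        rw [hΦ]; simp only [Function.update_of_ne hjj]
        exact hsgn j (Finset.mem_insert_of_mem hj)
    by_cases hA : ∀ v ∈ V, a j₀ v = 0
    · -- case A : `a j₀` vanishes on V, sign at j₀ is forced
      have hinj : Set.InjOn Φ (sgnSet a c (insert j₀ T') V p) := by
        intro σ₁ h₁ σ₂ h₂ he
        obtain ⟨-, v₁, hv₁, hs₁⟩ := h₁
        obtain ⟨-, v₂, hv₂, hs₂⟩ := h₂
        have e₁ := (hs₁ j₀ (Finset.mem_insert_self _ _)).2
        have e₂ := (hs₂ j₀ (Finset.mem_insert_self _ _)).2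
        rw [map_add, hA v₁ hv₁] at e₁
        rw [map_add, hA v₂ hv₂] at e₂
        funext j
        by_cases hjj : j = j₀
        · subst hjj; rw [e₁, e₂]
        · have := congrFun he j
          simpa [Φ, Function.update_of_ne hjj] using this
      calc (sgnSet a c (insert j₀ T') V p).ncard
          = (Φ '' sgnSet a c (insert j₀ T') V p).ncard := (Set.ncard_image_of_injOn hinj).symm
        _ ≤ (sgnSet a c T' V p).ncard := by
            refine Set.ncard_le_ncard ?_ hfinT'
            rintro σ' ⟨σ, hσ, rfl⟩; exact hΦmem σ hσ
        _ ≤ fB T'.card r := IH V p r hrank'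
        _ ≤ fB (insert j₀ T').card r := by rw [hTcard]; exact fB_mono_left r (Nat.le_succ _)
    · -- case B : `a j₀` is nonzero on V; then r ≥ 1
      push_neg at hA
      obtain ⟨v₀, hv₀V, hv₀⟩ := hA
      have haj₀ : (a j₀).comp V.subtype ≠ 0 := by
        intro h
        have := congrFun (congrArg DFunLike.coe h) ⟨v₀, hv₀V⟩
        simp at this
        exact hv₀ this
      have hr1 : 1 ≤ r := by
        by_contra h
        push_neg at h
        interval_cases r
        have hz : span ℝ ((fun j => (a j).comp V.subtype) '' (insert j₀ T' : Finset ι)) = ⊥ := by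
          have hfd : FiniteDimensional ℝ
              (span ℝ ((fun j => (a j).comp V.subtype) '' (insert j₀ T' : Finset ι))) := by
            apply FiniteDimensional.span_of_finite
            exact Set.Finite.image _ (Finset.finite_toSet _)
          exact Submodule.finrank_eq_zero.mp (Nat.le_zero.mp hrank)
        have : (a j₀).comp V.subtype ∈
            span ℝ ((fun j => (a j).comp V.subtype) '' (insert j₀ T' : Finset ι)) :=
          subset_span ⟨j₀, by simp, rfl⟩
        rw [hz] at this
        exact haj₀ (by simpa using this)
      obtain ⟨r'', rfl⟩ : ∃ r'', r = r'' + 1 := ⟨r - 1, by omega⟩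
      -- split into positive / negative parts
      set S := sgnSet a c (insert j₀ T') V p with hS
      set P := {σ ∈ S | σ j₀ = true} with hP
      set N := {σ ∈ S | σ j₀ = false} with hN
      have hPN : S = P ∪ N := by
        ext σ; simp only [hP, hN, Set.mem_union, Set.mem_setOf_eq, Set.mem_sep_iff]
        constructor
        · intro h; cases hσ : σ j₀ <;> simp [h, hσ]
        · rintro (h | h) <;> exact h.1
      have hPfin : P.Finite := hfin.subset (Set.sep_subset _ _)
      have hNfin : N.Finite := hfin.subset (Set.sep_subset _ _)
      have hdisj : Disjoint P N := by
        rw [Set.disjoint_iff]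
        rintro σ ⟨⟨-, h1⟩, ⟨-, h2⟩⟩
        rw [h1] at h2; exact absurd h2 (by simp)
      have hinjP : Set.InjOn Φ P := by
        rintro σ₁ ⟨-, h₁⟩ σ₂ ⟨-, h₂⟩ he
        funext j
        by_cases hjj : j = j₀
        · subst hjj; rw [h₁, h₂]
        · have := congrFun he j
          simpa [Φ, Function.update_of_ne hjj] using this
      have hinjN : Set.InjOn Φ N := by
        rintro σ₁ ⟨-, h₁⟩ σ₂ ⟨-, h₂⟩ he
        funext j
        by_cases hjj : j = j₀
        · subst hjj; rw [h₁, h₂]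
        · have := congrFun he j
          simpa [Φ, Function.update_of_ne hjj] using this
      have hsub : Φ '' P ∪ Φ '' N ⊆ sgnSet a c T' V p := by
        rintro σ' (⟨σ, hσ, rfl⟩ | ⟨σ, hσ, rfl⟩)
        · exact hΦmem σ hσ.1
        · exact hΦmem σ hσ.1
      -- bound the doubly-realizable sign vectors
      have hkey : (Φ '' P ∩ Φ '' N).ncard ≤ fB T'.card r'' := by
        rcases Set.eq_empty_or_nonempty (Φ '' P ∩ Φ '' N) with he | hne
        · rw [he]; simp
        · -- find a point on the hyperplane
          obtain ⟨σ₀', hσ₀'⟩ := hne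
          -- a generic element of the intersection gives a point on W ∩ H
          have hpoint : ∀ σ' ∈ Φ '' P ∩ Φ '' N, ∃ w ∈ V, a j₀ (p + w) = c j₀ ∧
              ∀ j ∈ T', a j (p + w) ≠ c j ∧ σ' j = decide (c j < a j (p + w)) := by
            rintro σ' ⟨⟨σp, hσp, hq1⟩, ⟨σn, hσn, hq2⟩⟩
            obtain ⟨⟨-, vp, hvpV, hsp⟩, hσpj⟩ := hσp
            obtain ⟨⟨-, vn, hvnV, hsn⟩, hσnj⟩ := hσn
            have hApos : c j₀ < a j₀ (p + vp) :=
              eq_decide_true (hsp j₀ (Finset.mem_insert_self _ _)).2 hσpj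
            have hAneg : a j₀ (p + vn) < c j₀ := by
              have h3 := eq_decide_false (hsn j₀ (Finset.mem_insert_self _ _)).2 hσnj
              exact lt_of_le_of_ne (not_lt.mp h3) (hsn j₀ (Finset.mem_insert_self _ _)).1
            set Ap := a j₀ (p + vp) with hAp
            set An := a j₀ (p + vn) with hAn
            have hden : 0 < Ap - An := by linarith
            set t := (Ap - c j₀) / (Ap - An) with ht
            have ht0 : 0 < t := div_pos (by linarith) hden
            have ht1 : t < 1 := by
              rw [ht, div_lt_one hden]; linarith
            refine ⟨vp + t • (vn - vp), V.add_mem hvpV (V.smul_mem t (V.sub_mem hvnV hvpV)),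
              ?_, ?_⟩
            · have : a j₀ (p + (vp + t • (vn - vp))) = Ap + t * (An - Ap) := by
                rw [hAp, hAn]
                simp [map_add, map_smul, map_sub, smul_eq_mul]
                ring
              rw [this, ht]
              field_simp
              ring
            · intro j hj
              have hvals : a j (p + (vp + t • (vn - vp)))
                  = (1 - t) * a j (p + vp) + t * a j (p + vn) := by
                simp [map_add, map_smul, map_sub, smul_eq_mul]
                ring
              have hsjp := hsp j (Finset.mem_insert_of_mem hj)
              have hsjn := hsn j (Finset.mem_insert_of_mem hj)
              have hjj : j ≠ j₀ := fun h => hj₀ (h ▸ hj)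
              have hσpj' : σ' j = σp j := by
                rw [← hq1, hΦ]; simp [Function.update_of_ne hjj]
              have hσnj' : σ' j = σn j := by
                rw [← hq2, hΦ]; simp [Function.update_of_ne hjj]
              have hspj2 : σ' j = decide (c j < a j (p + vp)) := by
                rw [hσpj']; exact hsjp.2
              have hsnj2 : σ' j = decide (c j < a j (p + vn)) := by
                rw [hσnj']; exact hsjn.2
              by_cases hb : σ' j = true
              · -- both strictly above
                have h1 : c j < a j (p + vp) := eq_decide_true hspj2 hb
                have h2 : c j < a j (p + vn) := eq_decide_true hsnj2 hb
                have hlt : c j < a j (p + (vp + t • (vn - vp))) := by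
                  rw [hvals]; nlinarith
                refine ⟨(ne_of_lt hlt).symm, ?_⟩
                rw [hb]; symm; exact decide_eq_true hlt
              · -- both strictly below
                have hbf : σ' j = false := by
                  cases hσj : σ' j
                  · rfl
                  · exact absurd hσj hb
                have h1 : a j (p + vp) < c j :=
                  lt_of_le_of_ne (not_lt.mp (eq_decide_false hspj2 hbf)) hsjp.1
                have h2 : a j (p + vn) < c j :=
                  lt_of_le_of_ne (not_lt.mp (eq_decide_false hsnj2 hbf)) hsjn.1
                have hlt : a j (p + (vp + t • (vn - vp))) < c j := by
                  rw [hvals]; nlinarith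
                refine ⟨ne_of_lt hlt, ?_⟩
                rw [hbf]; symm; exact decide_eq_false (not_lt.mpr (le_of_lt hlt))
          obtain ⟨w₀, hw₀V, hw₀e, -⟩ := hpoint σ₀' hσ₀'
          set V' := V ⊓ LinearMap.ker (a j₀) with hV'
          set p' := p + w₀ with hp'
          -- the intersection is contained in the sign set of the sliced arrangement
          have hsub2 : Φ '' P ∩ Φ '' N ⊆ sgnSet a c T' V' p' := by
            intro σ' hσ'
            obtain ⟨w, hwV, hwe, hws⟩ := hpoint σ' hσ'
            have hmemout : ∀ j, j ∉ T' → σ' j = false := by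
              obtain ⟨⟨σp, hσp, hq1⟩, -⟩ := hσ'
              intro j hj
              by_cases hjj : j = j₀
              · subst hjj; rw [← hq1]; simp [Φ]
              · have hnotin : j ∉ insert j₀ T' := by
                  simp only [Finset.mem_insert, not_or]; exact ⟨hjj, hj⟩
                rw [← hq1]
                simpa [Φ, Function.update_of_ne hjj] using hσp.1.1 j hnotin
            refine ⟨hmemout, w - w₀, ?_, ?_⟩
            · refine Submodule.mem_inf.mpr ⟨V.sub_mem hwV hw₀V, ?_⟩
              rw [LinearMap.mem_ker, map_sub]
              have : a j₀ w = c j₀ - a j₀ p := by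
                have := hwe; rw [map_add] at this; linarith
              have h0 : a j₀ w₀ = c j₀ - a j₀ p := by
                have := hw₀e; rw [map_add] at this; linarith
              rw [this, h0]; ring
            · intro j hj
              have : p' + (w - w₀) = p + w := by rw [hp']; abel
              rw [this]
              exact hws j hj
          -- rank of the sliced arrangement
          have hrank'' : finrank ℝ (span ℝ ((fun j => (a j).comp V'.subtype) '' T')) ≤ r'' := by
            set incl : V' →ₗ[ℝ] V := Submodule.inclusion inf_le_left with hincl
            set ρ : (V →ₗ[ℝ] ℝ) →ₗ[ℝ] (V' →ₗ[ℝ] ℝ) := LinearMap.lcomp ℝ ℝ incl with hρ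
            have hcomp : ∀ j, (a j).comp V'.subtype = ρ ((a j).comp V.subtype) := by
              intro j
              ext ⟨v, hv⟩
              simp [hρ, hincl, LinearMap.lcomp_apply, Submodule.inclusion]
            have him : (fun j => (a j).comp V'.subtype) '' T'
                = ρ '' ((fun j => (a j).comp V.subtype) '' T') := by
              rw [← Set.image_comp]
              apply Set.image_congr
              intro j _; exact hcomp j
            rw [him, Submodule.span_image]
            set Q := span ℝ ((fun j => (a j).comp V.subtype) '' (insert j₀ T' : Finset ι)) with hQ
            have hfdQ : FiniteDimensional ℝ Q := by
              apply FiniteDimensional.span_of_finite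
              exact Set.Finite.image _ (Finset.finite_toSet _)
            have hle : map ρ (span ℝ ((fun j => (a j).comp V.subtype) '' T')) ≤ map ρ Q := by
              apply Submodule.map_mono
              apply span_mono
              apply Set.image_mono
              intro z hz; exact Finset.mem_insert_of_mem hz
            have hQfr : finrank ℝ (map ρ Q) ≤ r'' := by
              set gmap := ρ.comp Q.subtype with hgmap
              have hrange : LinearMap.range gmap = map ρ Q := by
                rw [hgmap, LinearMap.range_comp, Submodule.range_subtype]
              have hrn := LinearMap.finrank_range_add_finrank_ker (K := ℝ) (V := Q) (V₂ := V' →ₗ[ℝ] ℝ) gmap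
              have hkerpos : 0 < finrank ℝ (LinearMap.ker gmap) := by
                letI : AddCommGroup (LinearMap.ker gmap) := @Submodule.addCommGroup ℝ Q _ _ _ (LinearMap.ker gmap)
                refine (Module.finrank_pos_iff_exists_ne_zero (R := ℝ) (M := LinearMap.ker gmap)).mpr ?_
                have hmem : (a j₀).comp V.subtype ∈ Q :=
                  subset_span ⟨j₀, by simp, rfl⟩
                refine ⟨⟨⟨(a j₀).comp V.subtype, hmem⟩, ?_⟩, ?_⟩
                · rw [LinearMap.mem_ker, hgmap]
                  simp only [LinearMap.coe_comp, Function.comp_apply, Submodule.coe_subtype]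
                  ext ⟨v, hv⟩
                  have hv2 : v ∈ LinearMap.ker (a j₀) := (Submodule.mem_inf.mp hv).2
                  simp [hρ, LinearMap.lcomp_apply, hincl, Submodule.inclusion]
                  exact hv2
                · intro h
                  apply haj₀
                  have := congrArg Subtype.val h
                  simpa using this
              have hQr : finrank ℝ Q ≤ r'' + 1 := hrank
              rw [← hrange]
              omega
            calc finrank ℝ (map ρ (span ℝ ((fun j => (a j).comp V.subtype) '' T')))
                ≤ finrank ℝ (map ρ Q) := finrank_mono hle
              _ ≤ r'' := hQfr
          calc (Φ '' P ∩ Φ '' N).ncard ≤ (sgnSet a c T' V' p').ncard :=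
                Set.ncard_le_ncard hsub2 (sgnSet_finite a c T' V' p')
            _ ≤ fB T'.card r'' := IH V' p' r'' hrank''
      -- put things together
      have hcount : S.ncard = (Φ '' P).ncard + (Φ '' N).ncard := by
        rw [hPN, Set.ncard_union_eq hdisj hPfin hNfin,
          Set.ncard_image_of_injOn hinjP, Set.ncard_image_of_injOn hinjN]
      have hie := Set.ncard_union_add_ncard_inter (Φ '' P) (Φ '' N)
        (hPfin.image Φ) (hNfin.image Φ)
      have hub : (Φ '' P ∪ Φ '' N).ncard ≤ fB T'.card (r'' + 1) := by
        refine le_trans (Set.ncard_le_ncard hsub hfinT') (IH V p (r''+1) hrank')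
      calc S.ncard = (Φ '' P).ncard + (Φ '' N).ncard := hcount
        _ = (Φ '' P ∪ Φ '' N).ncard + (Φ '' P ∩ Φ '' N).ncard := hie.symm
        _ ≤ fB T'.card (r''+1) + fB T'.card r'' := Nat.add_le_add hub hkey
        _ = fB (T'.card + 1) (r''+1) := (fB_pascal _ _).symm
        _ = fB (insert j₀ T').card (r''+1) := by rw [hTcard]

open Finset

/-- Dot product of coefficient vector with point. -/
def pdot {n : ℕ} (a : Fin n → ℝ) (ξ : Fin n → ℝ) : ℝ := ∑ i, a i * ξ i

lemma pdot_add {n : ℕ} (a x y : Fin n → ℝ) : pdot a (x + y) = pdot a x + pdot a y := by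
  unfold pdot
  rw [← Finset.sum_add_distrib]
  refine Finset.sum_congr rfl fun i _ => ?_
  simp [mul_add]

lemma pdot_smul {n : ℕ} (a : Fin n → ℝ) (t : ℝ) (x : Fin n → ℝ) :
    pdot a (t • x) = t * pdot a x := by
  unfold pdot
  rw [Finset.mul_sum]
  refine Finset.sum_congr rfl fun i _ => ?_
  simp [smul_eq_mul]; ring

lemma pdot_sub {n : ℕ} (a x y : Fin n → ℝ) : pdot a (x - y) = pdot a x - pdot a y := by
  unfold pdot
  rw [← Finset.sum_sub_distrib]
  refine Finset.sum_congr rfl fun i _ => ?_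
  simp [mul_sub]

lemma pdot_continuous {n : ℕ} (a : Fin n → ℝ) : Continuous (fun ξ => pdot a ξ) := by
  unfold pdot
  exact continuous_finset_sum _ fun i _ => (continuous_const.mul (continuous_apply i))

lemma pdot_segment {n : ℕ} (a : Fin n → ℝ) (u w : Fin n → ℝ) (t : ℝ) :
    pdot a (u + t • (w - u)) = pdot a u + t * (pdot a w - pdot a u) := by
  rw [pdot_add, pdot_smul, pdot_sub]

lemma segment_mem_convex {n : ℕ} {U : Set (Fin n → ℝ)} (hU : Convex ℝ U)
    {u w : Fin n → ℝ} (hu : u ∈ U) (hw : w ∈ U) {t : ℝ} (h0 : 0 ≤ t) (h1 : t ≤ 1) :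
    u + t • (w - u) ∈ U := by
  have := hU hu hw (by linarith : (0:ℝ) ≤ 1 - t) h0 (by ring)
  have he : (1 - t) • u + t • w = u + t • (w - u) := by
    rw [smul_sub, sub_smul, one_smul]; abel
  rwa [he] at this

/-- If two hyperplane descriptions with nonzero normals define the same set, the affine
functionals are proportional. -/
lemma hyperplane_scale {n : ℕ} {a b : Fin n → ℝ} {c d : ℝ} (ha : a ≠ 0) (hb : b ≠ 0)
    (h : {ξ : Fin n → ℝ | pdot a ξ = c} = {ξ : Fin n → ℝ | pdot b ξ = d}) :
    ∃ lam : ℝ, lam ≠ 0 ∧ ∀ ξ, pdot a ξ - c = lam * (pdot b ξ - d) := by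
  obtain ⟨i₀, hi₀⟩ : ∃ i, b i ≠ 0 := by
    by_contra hc; push_neg at hc
    exact hb (funext hc)
  set u : Fin n → ℝ := fun i => if i = i₀ then 1 / b i₀ else 0 with hu
  have hbu : pdot b u = 1 := by
    unfold pdot
    rw [Finset.sum_eq_single i₀]
    · simp [hu]; field_simp
    · intro i _ hne; simp [hu, hne]
    · simp
  set ξ₀ : Fin n → ℝ := d • u with hξ₀
  have hbξ₀ : pdot b ξ₀ = d := by rw [hξ₀, pdot_smul, hbu]; ring
  have haξ₀ : pdot a ξ₀ = c := by
    have : ξ₀ ∈ {ξ : Fin n → ℝ | pdot b ξ = d} := hbξ₀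
    rw [← h] at this; exact this
  have hker : ∀ v, pdot b v = 0 → pdot a v = 0 := by
    intro v hv
    have : ξ₀ + v ∈ {ξ : Fin n → ℝ | pdot b ξ = d} := by
      show pdot b (ξ₀ + v) = d
      rw [pdot_add, hbξ₀, hv]; ring
    rw [← h] at this
    have h2 : pdot a (ξ₀ + v) = c := this
    rw [pdot_add, haξ₀] at h2; linarith
  refine ⟨pdot a u, ?_, ?_⟩
  · intro h0
    apply ha
    funext i
    have hi : ∀ ξ : Fin n → ℝ, pdot a ξ = c := by
      intro ξ
      have := hker (ξ - (pdot b ξ - d) • u - ξ₀) (by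
        rw [pdot_sub, pdot_sub, pdot_smul, hbu, hbξ₀]; ring)
      rw [pdot_sub, pdot_sub, pdot_smul, haξ₀, h0] at this
      linarith
    have h00 : c = 0 := by
      have := hi 0
      unfold pdot at this
      simpa using this.symm
    have := hi (fun j => if j = i then 1 else 0)
    rw [h00] at this
    unfold pdot at this
    rw [Finset.sum_eq_single i] at this
    · simpa using this
    · intro j _ hne; simp [hne]
    · simp
  · intro ξ
    have := hker (ξ - (pdot b ξ - d) • u - ξ₀) (by
      rw [pdot_sub, pdot_sub, pdot_smul, hbu, hbξ₀]; ring)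
    rw [pdot_sub, pdot_sub, pdot_smul, haξ₀] at this
    linarith

/-- A convex set not contained in any of finitely many hyperplanes has a point avoiding
all of them. -/
lemma convex_avoid {n : ℕ} {ι : Type*} {U : Set (Fin n → ℝ)} (hU : Convex ℝ U)
    {ξ0 : Fin n → ℝ} (hξ0 : ξ0 ∈ U) (T : Finset ι) (a : ι → Fin n → ℝ) (c : ι → ℝ)
    (h : ∀ j ∈ T, ∃ w ∈ U, pdot (a j) w ≠ c j) :
    ∃ u ∈ U, ∀ j ∈ T, pdot (a j) u ≠ c j := by
  classical
  induction T using Finset.induction with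
  | empty => exact ⟨ξ0, hξ0, by simp⟩
  | @insert j₀ T' hj₀ IH =>
    obtain ⟨u', hu', hu'p⟩ := IH (fun j hj => h j (Finset.mem_insert_of_mem hj))
    obtain ⟨w, hw, hwp⟩ := h j₀ (Finset.mem_insert_self _ _)
    -- bad parameter set is finite
    set α : ι → ℝ := fun j => pdot (a j) u' - c j with hα
    set β : ι → ℝ := fun j => pdot (a j) w - pdot (a j) u' with hβ
    have hBfin : ∀ j ∈ insert j₀ T', {t : ℝ | α j + β j * t = 0}.Finite := by
      intro j hj
      by_cases hb : β j = 0
      · have hane : α j + β j ≠ 0 ∨ α j ≠ 0 := by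
          rcases Finset.mem_insert.mp hj with rfl | hj'
          · left; rw [hα, hβ]; simp only; intro hcon; apply hwp; linarith
          · right
            intro hcon
            have hcon' : pdot (a j) u' - c j = 0 := hcon
            exact hu'p j hj' (by linarith)
        have : {t : ℝ | α j + β j * t = 0} = ∅ := by
          ext t; simp only [Set.mem_setOf_eq, Set.mem_empty_iff_false, iff_false]
          rw [hb]
          rcases hane with h1 | h1
          · rw [hb] at h1; intro hcon; apply h1; linarith
          · intro hcon; apply h1; linarith
        rw [this]; exact Set.finite_empty
      · apply Set.Finite.subset (Set.finite_singleton (-(α j) / β j))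
        intro t ht
        simp only [Set.mem_setOf_eq] at ht
        simp only [Set.mem_singleton_iff]
        field_simp
        linarith
    have hBad : (⋃ j ∈ insert j₀ T', {t : ℝ | α j + β j * t = 0}).Finite :=
      Set.Finite.biUnion (Finset.finite_toSet _) hBfin
    have hIoo : (Set.Ioo (0:ℝ) 1).Infinite :=
      Set.infinite_coe_iff.mp (Set.Ioo.infinite (by norm_num))
    obtain ⟨t, ht⟩ := (hIoo.diff hBad).nonempty
    obtain ⟨htI, htB⟩ := ht
    refine ⟨u' + t • (w - u'), segment_mem_convex hU hu' hw (le_of_lt htI.1) (le_of_lt htI.2), ?_⟩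
    intro j hj
    intro hcon
    apply htB
    refine Set.mem_biUnion hj ?_
    show α j + β j * t = 0
    rw [pdot_segment] at hcon
    rw [hα, hβ]
    simp only
    linarith

/-- Sign stability along a short initial piece of a segment. -/
lemma sign_small_t {al be t : ℝ} (h0 : 0 < t) (hsm : t < |al| / (|be| + 1)) :
    (0 < al + t * be ↔ 0 < al) ∧ al + t * be ≠ 0 := by
  have hbe : 0 ≤ |be| := abs_nonneg be
  have hb1 : (0:ℝ) < |be| + 1 := by linarith
  have htb : t * |be| < |al| := by
    calc t * |be| ≤ t * (|be| + 1) := by nlinarith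
    _ < (|al| / (|be| + 1)) * (|be| + 1) := by
        apply mul_lt_mul_of_pos_right hsm hb1
    _ = |al| := by field_simp
  have habs : |t * be| < |al| := by
    rw [abs_mul, abs_of_pos h0]; exact htb
  constructor
  · constructor
    · intro h
      by_contra hneg
      push_neg at hneg
      have hal : al < 0 := by
        rcases lt_or_eq_of_le hneg with h1 | h1
        · exact h1
        · exfalso
          rw [h1] at habs h
          simp only [abs_zero] at habs
          have h2 := le_abs_self (t * be)
          linarith
      rw [abs_of_neg hal] at habs
      have := neg_abs_le (t * be)
      have := le_abs_self (t * be)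
      linarith
    · intro h
      rw [abs_of_pos h] at habs
      have := neg_abs_le (t * be)
      linarith
  · intro hcon
    have : t * be = -al := by linarith
    rw [this] at habs
    simp at habs
open Finset Module Submodule

section Bridge

variable {nx ny nξ m : ℕ}

lemma feasS_iff (hv : Fin m → ℤ) (H : Matrix (Fin m) (Fin nξ) ℤ)
    (A0 : Matrix (Fin m) (Fin nx) ℤ) (Ai : Fin nξ → Matrix (Fin m) (Fin nx) ℤ)
    (B0 : Matrix (Fin m) (Fin ny) ℤ) (x : Fin nx → ℝ) (y : Fin ny → ℝ) (ξ : Fin nξ → ℝ) :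
    FeasS hv H A0 Ai B0 x y ξ ↔
      ∀ l, rowRhs hv A0 B0 x y l ≤ pdot (rowCoef H Ai x l) ξ := by
  unfold FeasS rowRhs rowCoef pdot
  apply forall_congr'
  intro l
  have key1 : (∑ j, ((A0 l j : ℝ) + ∑ i, ξ i * (Ai i l j : ℝ)) * x j)
      = (∑ j, (A0 l j : ℝ) * x j) + ∑ i, (∑ j, (Ai i l j : ℝ) * x j) * ξ i := by
    have h1 : ∀ j ∈ Finset.univ, ((A0 l j : ℝ) + ∑ i, ξ i * (Ai i l j : ℝ)) * x j
        = (A0 l j : ℝ) * x j + ∑ i, (Ai i l j : ℝ) * x j * ξ i := by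
      intro j _
      rw [add_mul, Finset.sum_mul]
      congr 1
      exact Finset.sum_congr rfl fun i _ => by ring
    rw [Finset.sum_congr rfl h1, Finset.sum_add_distrib]
    congr 1
    rw [Finset.sum_comm]
    exact Finset.sum_congr rfl fun i _ => by rw [Finset.sum_mul]
  have key2 : (∑ i, ((∑ j, (Ai i l j : ℝ) * x j) - (H l i : ℝ)) * ξ i)
      = (∑ i, (∑ j, (Ai i l j : ℝ) * x j) * ξ i) - ∑ i, (H l i : ℝ) * ξ i := by
    rw [← Finset.sum_sub_distrib]
    exact Finset.sum_congr rfl fun i _ => by ring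
  constructor
  · intro h; rw [key2]; linarith [h, key1]
  · intro h; rw [key2] at h; linarith [h, key1]

/-- `pdot a` as a linear map in the second argument, linearly depending on `a`. -/
def thetaL (n : ℕ) : (Fin n → ℝ) →ₗ[ℝ] ((Fin n → ℝ) →ₗ[ℝ] ℝ) where
  toFun a :=
    { toFun := fun ξ => pdot a ξ
      map_add' := fun x y => pdot_add a x y
      map_smul' := fun t x => by simp [pdot_smul] }
  map_add' a b := by
    refine LinearMap.ext fun ξ => ?_
    show pdot (a + b) ξ = pdot a ξ + pdot b ξ
    unfold pdot
    rw [← Finset.sum_add_distrib]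
    exact Finset.sum_congr rfl fun i _ => by simp [add_mul]
  map_smul' t a := by
    refine LinearMap.ext fun ξ => ?_
    show pdot (t • a) ξ = t * pdot a ξ
    unfold pdot
    rw [Finset.mul_sum]
    exact Finset.sum_congr rfl fun i _ => by simp [mul_assoc]

@[simp] lemma thetaL_apply {n : ℕ} (a ξ : Fin n → ℝ) : thetaL n a ξ = pdot a ξ := rfl

lemma matA_row (H : Matrix (Fin m) (Fin nξ) ℤ) (Ai : Fin nξ → Matrix (Fin m) (Fin nx) ℤ)
    (x : Fin nx → ℝ) (l : Fin m) : matA H Ai x l = rowCoef H Ai x l := rfl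

lemma feasS_closed (hv : Fin m → ℤ) (H : Matrix (Fin m) (Fin nξ) ℤ)
    (A0 : Matrix (Fin m) (Fin nx) ℤ) (Ai : Fin nξ → Matrix (Fin m) (Fin nx) ℤ)
    (B0 : Matrix (Fin m) (Fin ny) ℤ) (x : Fin nx → ℝ) (y : Fin ny → ℝ) :
    IsClosed {ξ : Fin nξ → ℝ | FeasS hv H A0 Ai B0 x y ξ} := by
  have : {ξ : Fin nξ → ℝ | FeasS hv H A0 Ai B0 x y ξ}
      = ⋂ l, {ξ | rowRhs hv A0 B0 x y l ≤ pdot (rowCoef H Ai x l) ξ} := by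
    ext ξ
    simp only [Set.mem_setOf_eq, Set.mem_iInter, feasS_iff]
  rw [this]
  exact isClosed_iInter fun l => isClosed_le continuous_const (pdot_continuous _)

end Bridge
section Regions

open Finset Module Submodule

variable {nx ny nξ m : ℕ}

set_option maxHeartbeats 2000000 in
lemma REG (hm : 0 < m) (hv : Fin m → ℤ) (H : Matrix (Fin m) (Fin nξ) ℤ)
    (A0 : Matrix (Fin m) (Fin nx) ℤ) (Ai : Fin nξ → Matrix (Fin m) (Fin nx) ℤ)
    (B0 : Matrix (Fin m) (Fin ny) ℤ)
    (Yx : (Fin nx → ℝ) → Set (Fin ny → ℝ)) (U : Set (Fin nξ → ℝ))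
    (hUcomp : IsCompact U) (hUconv : Convex ℝ U) (hUne : U.Nonempty)
    (Y : Set (Fin ny → ℝ)) (hYfin : Y.Finite)
    (x : Fin nx → ℝ) (hsub : Yx x ⊆ Y)
    (η ω : ℕ) (hηx : (HypSet hv H A0 Ai B0 Yx U x).ncard ≤ η)
    (hωx : (matA H Ai x).rank ≤ ω) :
    ∃ (R : ℕ) (D : Fin R → Set (Fin nξ → ℝ)),
      (∀ t, D t ⊆ U ∧ Convex ℝ (D t) ∧ RecourseStableS hv H A0 Ai B0 Yx x (D t)) ∧
      (⋃ t, closure (D t)) = U ∧ R ≤ fB η ω := by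
  classical
  set 𝓗 := HypSet hv H A0 Ai B0 Yx U x with h𝓗
  -- 𝓗 is finite
  have h𝓗fin : 𝓗.Finite := by
    apply Set.Finite.subset (Set.Finite.image
      (fun p : (Fin ny → ℝ) × Fin m =>
        {ξ : Fin nξ → ℝ | pdot (rowCoef H Ai x p.2) ξ = rowRhs hv A0 B0 x p.1 p.2})
      (((hYfin.subset hsub)).prod (Set.finite_univ (α := Fin m))))
    rintro P ⟨y, hy, l, ha, hP, hne⟩
    exact ⟨(y, l), ⟨hy, Set.mem_univ l⟩, hP.symm⟩
  -- representatives
  have hrep : ∀ P : Set (Fin nξ → ℝ), ∃ yl : (Fin ny → ℝ) × Fin m,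
      P ∈ 𝓗 → (yl.1 ∈ Yx x ∧ rowCoef H Ai x yl.2 ≠ 0 ∧
        P = {ξ : Fin nξ → ℝ | pdot (rowCoef H Ai x yl.2) ξ = rowRhs hv A0 B0 x yl.1 yl.2}) := by
    intro P
    by_cases hP : P ∈ 𝓗
    · obtain ⟨y, hy, l, ha, hPe, hne⟩ := hP
      exact ⟨(y, l), fun _ => ⟨hy, ha, hPe⟩⟩
    · exact ⟨(0, ⟨0, hm⟩), fun h => absurd h hP⟩
  choose rep hreps using hrep
  have hrep1 : ∀ P ∈ 𝓗, (rep P).1 ∈ Yx x := fun P hP => (hreps P hP).1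
  have hrep2 : ∀ P ∈ 𝓗, rowCoef H Ai x (rep P).2 ≠ 0 := fun P hP => (hreps P hP).2.1
  have hrep3 : ∀ P ∈ 𝓗,
      P = {ξ : Fin nξ → ℝ | pdot (rowCoef H Ai x (rep P).2) ξ
        = rowRhs hv A0 B0 x (rep P).1 (rep P).2} := fun P hP => (hreps P hP).2.2
  set av : Set (Fin nξ → ℝ) → (Fin nξ → ℝ) := fun P => rowCoef H Ai x (rep P).2 with hav
  set cv : Set (Fin nξ → ℝ) → ℝ := fun P => rowRhs hv A0 B0 x (rep P).1 (rep P).2 with hcv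
  set T0 : Finset (Set (Fin nξ → ℝ)) := h𝓗fin.toFinset with hT0
  set Tc : Finset (Set (Fin nξ → ℝ)) := T0.filter (fun P => ¬ U ⊆ P) with hTc
  have hTcmem : ∀ P ∈ Tc, P ∈ 𝓗 ∧ ¬ U ⊆ P := by
    intro P hP
    have := Finset.mem_filter.mp hP
    exact ⟨h𝓗fin.mem_toFinset.mp this.1, this.2⟩
  -- the realizable sign vectors
  set Sreal := sgnSet (fun P => thetaL nξ (av P)) cv Tc
    (⊤ : Submodule ℝ (Fin nξ → ℝ)) 0 with hSreal
  have hSfinite := sgnSet_finite (fun P => thetaL nξ (av P)) cv Tc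
    (⊤ : Submodule ℝ (Fin nξ → ℝ)) 0
  set Sfin := hSfinite.toFinset with hSfin
  -- rank bound
  have hrk : finrank ℝ (span ℝ
      ((fun P => (thetaL nξ (av P)).comp (⊤ : Submodule ℝ (Fin nξ → ℝ)).subtype) '' Tc)) ≤ ω := by
    set κ : ((Fin nξ → ℝ) →ₗ[ℝ] ℝ) →ₗ[ℝ] ((⊤ : Submodule ℝ (Fin nξ → ℝ)) →ₗ[ℝ] ℝ) :=
      LinearMap.lcomp ℝ ℝ (⊤ : Submodule ℝ (Fin nξ → ℝ)).subtype with hκ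
    set L : (Fin nξ → ℝ) →ₗ[ℝ] ((⊤ : Submodule ℝ (Fin nξ → ℝ)) →ₗ[ℝ] ℝ) :=
      κ.comp (thetaL nξ) with hL
    have him : (fun P => (thetaL nξ (av P)).comp (⊤ : Submodule ℝ (Fin nξ → ℝ)).subtype) '' Tc
        = L '' (av '' Tc) := by
      rw [Set.image_image]
      rfl
    rw [him, Submodule.span_image]
    have hsp : span ℝ (av '' Tc) ≤ span ℝ (Set.range (matA H Ai x)) := by
      apply span_mono
      rintro _ ⟨P, _, rfl⟩
      exact ⟨(rep P).2, rfl⟩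
    have h1 : finrank ℝ (map L (span ℝ (av '' ↑Tc)))
        ≤ finrank ℝ (span ℝ (av '' ↑Tc)) := Submodule.finrank_map_le L _
    have h2 : finrank ℝ (span ℝ (av '' ↑Tc))
        ≤ finrank ℝ (span ℝ (Set.range (matA H Ai x))) := finrank_mono hsp
    have h3 : finrank ℝ (span ℝ (Set.range (matA H Ai x))) = (matA H Ai x).rank := by
      have := Matrix.rank_eq_finrank_span_cols (matA H Ai x).transpose
      rw [Matrix.rank_transpose] at this
      exact this.symm
    calc finrank ℝ (map L (span ℝ (av '' ↑Tc))) ≤ finrank ℝ (span ℝ (av '' ↑Tc)) := h1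
      _ ≤ finrank ℝ (span ℝ (Set.range (matA H Ai x))) := h2
      _ = (matA H Ai x).rank := h3
      _ ≤ ω := hωx
  have hcard : Sfin.card ≤ fB η ω := by
    have h1 : Sreal.ncard ≤ fB Tc.card ω :=
      sgnSet_card (fun P => thetaL nξ (av P)) cv Tc (⊤ : Submodule ℝ (Fin nξ → ℝ)) 0 ω hrk
    have h2 : Sreal.ncard = Sfin.card := by
      rw [hSfin]; exact Set.ncard_eq_toFinset_card _ hSfinite
    have h3 : Tc.card ≤ η := by
      calc Tc.card ≤ T0.card := Finset.card_filter_le _ _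
        _ = 𝓗.ncard := (Set.ncard_eq_toFinset_card _ h𝓗fin).symm
        _ ≤ η := hηx
    calc Sfin.card = Sreal.ncard := h2.symm
      _ ≤ fB Tc.card ω := h1
      _ ≤ fB η ω := fB_mono_left ω h3
  -- the regions
  set Dset : (Set (Fin nξ → ℝ) → Bool) → Set (Fin nξ → ℝ) := fun σ =>
    {ξ ∈ U | ∀ P ∈ Tc, pdot (av P) ξ ≠ cv P ∧ σ P = decide (cv P < pdot (av P) ξ)} with hDset
  refine ⟨Sfin.card, fun t => Dset (Sfin.equivFin.symm t).val, ?_, ?_, hcard⟩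
  · -- basic properties of each region
    intro t
    show Dset (Sfin.equivFin.symm t).val ⊆ U ∧ Convex ℝ (Dset (Sfin.equivFin.symm t).val) ∧
      RecourseStableS hv H A0 Ai B0 Yx x (Dset (Sfin.equivFin.symm t).val)
    set σ : Set (Fin nξ → ℝ) → Bool := (Sfin.equivFin.symm t).val with hσ
    refine ⟨Set.sep_subset _ _, ?_, ?_⟩
    · -- convexity
      intro ξ₁ h₁ ξ₂ h₂ s u hs hu hsu
      refine ⟨hUconv h₁.1 h₂.1 hs hu hsu, ?_⟩
      intro P hP
      obtain ⟨hne₁, hsg₁⟩ := h₁.2 P hP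
      obtain ⟨hne₂, hsg₂⟩ := h₂.2 P hP
      have hval : pdot (av P) (s • ξ₁ + u • ξ₂) = s * pdot (av P) ξ₁ + u * pdot (av P) ξ₂ := by
        rw [pdot_add, pdot_smul, pdot_smul]
      by_cases hb : σ P = true
      · have hgt₁ : cv P < pdot (av P) ξ₁ := eq_decide_true hsg₁ hb
        have hgt₂ : cv P < pdot (av P) ξ₂ := eq_decide_true hsg₂ hb
        have hgt : cv P < pdot (av P) (s • ξ₁ + u • ξ₂) := by
          rw [hval]
          rcases eq_or_lt_of_le hs with hs0 | hs0
          · rw [← hs0] at hsu ⊢; simp at hsu ⊢; rw [hsu]; linarith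
          · have hcv1 : s * cv P + u * cv P = cv P := by rw [← add_mul, hsu, one_mul]
            nlinarith [mul_pos hs0 (sub_pos.mpr hgt₁),
              mul_nonneg hu (sub_nonneg.mpr (le_of_lt hgt₂))]
        exact ⟨(ne_of_lt hgt).symm, hb.trans (decide_eq_true hgt).symm⟩
      · have hbf : σ P = false := by
          cases hσP : σ P
          · rfl
          · exact absurd hσP hb
        have hlt₁ : pdot (av P) ξ₁ < cv P :=
          lt_of_le_of_ne (not_lt.mp (eq_decide_false hsg₁ hbf)) hne₁
        have hlt₂ : pdot (av P) ξ₂ < cv P :=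
          lt_of_le_of_ne (not_lt.mp (eq_decide_false hsg₂ hbf)) hne₂
        have hlt : pdot (av P) (s • ξ₁ + u • ξ₂) < cv P := by
          rw [hval]
          rcases eq_or_lt_of_le hs with hs0 | hs0
          · rw [← hs0] at hsu ⊢; simp at hsu ⊢; rw [hsu]; linarith
          · have hcv1 : s * cv P + u * cv P = cv P := by rw [← add_mul, hsu, one_mul]
            nlinarith [mul_pos hs0 (sub_pos.mpr hlt₁),
              mul_nonneg hu (sub_nonneg.mpr (le_of_lt hlt₂))]
        exact ⟨ne_of_lt hlt, hbf.trans (decide_eq_false (not_lt.mpr (le_of_lt hlt))).symm⟩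
    · -- recourse stability
      have hstab : ∀ y ∈ Yx x, ∀ ξ ∈ Dset σ, ∀ ξ' ∈ Dset σ,
          FeasS hv H A0 Ai B0 x y ξ → FeasS hv H A0 Ai B0 x y ξ' := by
        intro y hy ξ hξ ξ' hξ' hfeas
        rw [feasS_iff] at hfeas ⊢
        intro l
        set a := rowCoef H Ai x l with ha'
        set rhs := rowRhs hv A0 B0 x y l with hrhs'
        by_cases ha : a = 0
        · have h0 : ∀ ζ : Fin nξ → ℝ, pdot a ζ = 0 := by
            intro ζ; rw [ha]; unfold pdot; simp
          rw [h0]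
          have := hfeas l
          rw [h0] at this
          exact this
        · set P : Set (Fin nξ → ℝ) := {ζ | pdot a ζ = rhs} with hP'
          by_cases hPU : (P ∩ U).Nonempty
          · by_cases hUP : U ⊆ P
            · have : ξ' ∈ P := hUP hξ'.1
              exact le_of_eq this.symm
            · have hP𝓗 : P ∈ 𝓗 := ⟨y, hy, l, ha, rfl, hPU⟩
              have hPTc : P ∈ Tc := Finset.mem_filter.mpr ⟨h𝓗fin.mem_toFinset.mpr hP𝓗, hUP⟩
              obtain ⟨hd₁, hσ₁⟩ := hξ.2 P hPTc
              obtain ⟨hd₂, hσ₂⟩ := hξ'.2 P hPTc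
              have hsets : {ζ : Fin nξ → ℝ | pdot a ζ = rhs}
                  = {ζ : Fin nξ → ℝ | pdot (av P) ζ = cv P} := hrep3 P hP𝓗
              obtain ⟨lam, hlam, hprop⟩ := hyperplane_scale ha (hrep2 P hP𝓗) hsets
              have hfl := hfeas l
              have hpos : 0 < lam * (pdot (av P) ξ - cv P) := by
                have h1 : lam * (pdot (av P) ξ - cv P) ≠ 0 :=
                  mul_ne_zero hlam (sub_ne_zero.mpr hd₁)
                have h2 : 0 ≤ lam * (pdot (av P) ξ - cv P) := by
                  rw [← hprop ξ]; linarith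
                exact lt_of_le_of_ne h2 (Ne.symm h1)
              have hsame : (0 < pdot (av P) ξ - cv P) ↔ (0 < pdot (av P) ξ' - cv P) := by
                have : (cv P < pdot (av P) ξ) ↔ (cv P < pdot (av P) ξ') :=
                  decide_eq_decide.mp (hσ₁.symm.trans hσ₂)
                constructor <;> intro hh
                · have := this.mp (by linarith); linarith
                · have := this.mpr (by linarith); linarith
              have hpos' : 0 < lam * (pdot (av P) ξ' - cv P) := by
                rcases mul_pos_iff.mp hpos with ⟨hl, hr⟩ | ⟨hl, hr⟩
                · exact mul_pos hl (hsame.mp hr)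
                · apply mul_pos_of_neg_of_neg hl
                  have h1 : pdot (av P) ξ' - cv P ≠ 0 := sub_ne_zero.mpr hd₂
                  rcases lt_or_gt_of_ne h1 with hh | hh
                  · exact hh
                  · exact absurd (hsame.mpr hh) (not_lt.mpr (le_of_lt hr))
              have := hprop ξ'
              linarith
          · -- the hyperplane misses U : sign is constant on U
            have hna : ∀ ζ ∈ U, pdot a ζ ≠ rhs := by
              intro ζ hζ hcon
              exact hPU ⟨ζ, hcon, hζ⟩
            by_contra hcon
            push_neg at hcon
            obtain ⟨ζ, hζU, hζe⟩ := hUconv.isPreconnected.intermediate_value₂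
              hξ'.1 hξ.1 ((pdot_continuous a).continuousOn)
              (continuousOn_const (c := rhs))
              (le_of_lt hcon) (hfeas l)
            exact hna ζ hζU hζe
      intro y hy
      rcases Set.eq_empty_or_nonempty (Dset σ) with hD | ⟨ξ₀, hξ₀⟩
      · left
        intro ξ hξ
        rw [Set.eq_empty_iff_forall_notMem] at hD
        exact absurd hξ (hD ξ)
      · by_cases hf : FeasS hv H A0 Ai B0 x y ξ₀
        · left; intro ξ hξ; exact hstab y hy ξ₀ hξ₀ ξ hξ hf
        · right; intro ξ hξ hfe; exact hf (hstab y hy ξ hξ ξ₀ hξ₀ hfe)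
  · -- the closures cover U
    apply Set.eq_of_subset_of_subset
    · apply Set.iUnion_subset
      intro t
      exact closure_minimal (Set.sep_subset _ _) hUcomp.isClosed
    · intro ξ hξ
      -- find a point avoiding all crossing hyperplanes
      have havoid : ∀ P ∈ Tc, ∃ w ∈ U, pdot (av P) w ≠ cv P := by
        intro P hP
        obtain ⟨hP𝓗, hUP⟩ := hTcmem P hP
        obtain ⟨w, hwU, hwP⟩ := Set.not_subset.mp hUP
        refine ⟨w, hwU, ?_⟩
        intro hcon
        apply hwP
        rw [hrep3 P hP𝓗]
        exact hcon
      obtain ⟨u, huU, hup⟩ := convex_avoid hUconv hξ Tc av cv havoid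
      set al : Set (Fin nξ → ℝ) → ℝ := fun P => pdot (av P) ξ - cv P with hal
      set be : Set (Fin nξ → ℝ) → ℝ := fun P => pdot (av P) u - pdot (av P) ξ with hbe
      have halbe : ∀ P ∈ Tc, al P + be P ≠ 0 := by
        intro P hP hcon
        apply hup P hP
        have : pdot (av P) u - cv P = 0 := by
          have h1 : al P + be P = pdot (av P) u - cv P := by rw [hal, hbe]; ring
          rw [← h1]; exact hcon
        linarith
      set εf : Set (Fin nξ → ℝ) → ℝ := fun P =>
        if al P = 0 then 1 else |al P| / (|be P| + 1) with hεf
      have hεfpos : ∀ P ∈ Tc, 0 < εf P := by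
        intro P hP
        rw [hεf]
        by_cases h : al P = 0
        · simp [h]
        · simp only [h, if_false]
          apply div_pos (abs_pos.mpr h)
          have := abs_nonneg (be P); linarith
      set ε : ℝ := if h : Tc.Nonempty then min 1 (Tc.inf' h εf) else 1 with hε
      have hε0 : 0 < ε := by
        rw [hε]
        split
        · rename_i h
          apply lt_min one_pos
          rw [Finset.lt_inf'_iff]
          intro P hP; exact hεfpos P hP
        · norm_num
      have hε1 : ε ≤ 1 := by
        rw [hε]; split
        · exact min_le_left _ _
        · exact le_rfl
      have hεle : ∀ P ∈ Tc, ε ≤ εf P := by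
        intro P hP
        rw [hε]
        have hne : Tc.Nonempty := ⟨P, hP⟩
        rw [dif_pos hne]
        exact le_trans (min_le_right _ _) (Finset.inf'_le εf hP)
      -- comparison of signs along the initial segment
      have hcomp : ∀ P ∈ Tc, ∀ t ∈ Set.Ioo (0:ℝ) ε,
          (al P + t * be P ≠ 0) ∧ (0 < al P + t * be P ↔ 0 < al P + (ε/2) * be P) := by
        intro P hP t ht
        have hε2 : ε / 2 ∈ Set.Ioo (0:ℝ) ε := ⟨by linarith, by linarith⟩
        by_cases hzero : al P = 0
        · have hbne : be P ≠ 0 := by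
            intro hcon; apply halbe P hP; rw [hzero, hcon]; ring
          rw [hzero]
          simp only [zero_add]
          rcases lt_or_gt_of_ne hbne with hbneg | hbpos
          · constructor
            · exact ne_of_lt (mul_neg_of_pos_of_neg ht.1 hbneg)
            · constructor
              · intro hcon; exact absurd hcon (not_lt.mpr (le_of_lt (mul_neg_of_pos_of_neg ht.1 hbneg)))
              · intro hcon; exact absurd hcon (not_lt.mpr (le_of_lt (mul_neg_of_pos_of_neg hε2.1 hbneg)))
          · constructor
            · exact (ne_of_lt (mul_pos ht.1 hbpos)).symm
            · constructor
              · intro _; exact mul_pos hε2.1 hbpos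
              · intro _; exact mul_pos ht.1 hbpos
        · have hsm : ∀ s ∈ Set.Ioo (0:ℝ) ε, s < |al P| / (|be P| + 1) := by
            intro s hs
            calc s < ε := hs.2
              _ ≤ εf P := hεle P hP
              _ = |al P| / (|be P| + 1) := by rw [hεf]; simp [hzero]
          have h1 := sign_small_t ht.1 (hsm t ht)
          have h2 := sign_small_t hε2.1 (hsm (ε/2) hε2)
          exact ⟨h1.2, h1.1.trans h2.1.symm⟩
      -- the canonical sign vector
      set z : Fin nξ → ℝ := ξ + (ε/2) • (u - ξ) with hz
      set σs : Set (Fin nξ → ℝ) → Bool := fun P =>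
        if P ∈ Tc then decide (cv P < pdot (av P) z) else false with hσs
      have hmemIoo : ∀ t ∈ Set.Ioo (0:ℝ) ε, (ξ + t • (u - ξ)) ∈ Dset σs := by
        intro t ht
        refine ⟨segment_mem_convex hUconv hξ huU (le_of_lt ht.1) (le_of_lt (lt_of_lt_of_le ht.2 hε1)), ?_⟩
        intro P hP
        have hval : pdot (av P) (ξ + t • (u - ξ)) - cv P = al P + t * be P := by
          rw [pdot_segment, hal, hbe]; ring
        have hvalz : pdot (av P) z - cv P = al P + (ε/2) * be P := by
          rw [hz, pdot_segment, hal, hbe]; ring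
        obtain ⟨hne, hiff⟩ := hcomp P hP t ht
        constructor
        · intro hcon; apply hne; rw [← hval, hcon]; ring
        · rw [hσs]
          simp only [hP, if_pos]
          apply decide_eq_decide.mpr
          constructor
          · intro hh
            have h0 : 0 < al P + (ε/2) * be P := by linarith [hvalz]
            have h1 := hiff.mpr h0
            linarith [hval]
          · intro hh
            have h0 : 0 < al P + t * be P := by linarith [hval]
            have h1 := hiff.mp h0
            linarith [hvalz]
      -- σs is realizable
      have hσsS : σs ∈ Sreal := by
        have hε2 : ε / 2 ∈ Set.Ioo (0:ℝ) ε := ⟨by linarith, by linarith⟩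
        refine ⟨?_, z, Submodule.mem_top, ?_⟩
        · intro P hP; rw [hσs]; simp [hP]
        · intro P hP
          obtain ⟨hne, hiff⟩ := hcomp P hP (ε/2) hε2
          have hvalz : pdot (av P) z - cv P = al P + (ε/2) * be P := by
            rw [hz, pdot_segment, hal, hbe]; ring
          constructor
          · show thetaL nξ (av P) (0 + z) ≠ cv P
            rw [zero_add, thetaL_apply]
            intro hcon; apply hne; rw [← hvalz, hcon]; ring
          · show σs P = decide (cv P < thetaL nξ (av P) (0 + z))
            rw [zero_add, thetaL_apply, hσs]
            simp [hP]
      -- conclude : ξ is in the closure of the region of σs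
      set t₀ : Fin Sfin.card := Sfin.equivFin ⟨σs, hSfinite.mem_toFinset.mpr hσsS⟩ with ht₀
      refine Set.mem_iUnion.mpr ⟨t₀, ?_⟩
      show ξ ∈ closure (Dset (Sfin.equivFin.symm t₀).val)
      have hDt : Dset (Sfin.equivFin.symm t₀).val = Dset σs := by
        rw [ht₀, Equiv.symm_apply_apply]
      rw [hDt]
      rw [Metric.mem_closure_iff]
      intro δ hδ
      set d := dist u ξ with hd
      have hd0 : 0 ≤ d := dist_nonneg
      set t := min (ε/2) (δ / (2 * (d + 1))) with ht'
      have ht0 : 0 < t := lt_min (by linarith) (by positivity)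
      have htIoo : t ∈ Set.Ioo (0:ℝ) ε :=
        ⟨ht0, lt_of_le_of_lt (min_le_left _ _) (by linarith)⟩
      refine ⟨ξ + t • (u - ξ), hmemIoo t htIoo, ?_⟩
      have hdist : dist ξ (ξ + t • (u - ξ)) = t * ‖u - ξ‖ := by
        rw [dist_eq_norm]
        have : ξ - (ξ + t • (u - ξ)) = -(t • (u - ξ)) := by abel
        rw [this, norm_neg, norm_smul, Real.norm_eq_abs, abs_of_pos ht0]
      rw [hdist]
      have hnd : ‖u - ξ‖ = d := by rw [hd, dist_eq_norm]
      rw [hnd]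
      have h1 : t ≤ δ / (2 * (d + 1)) := min_le_right _ _
      have h2 : t * d ≤ (δ / (2 * (d + 1))) * (d + 1) := by
        apply _root_.mul_le_mul h1 (by linarith) hd0 (by positivity)
      have h3 : (δ / (2 * (d + 1))) * (d + 1) = δ / 2 := by field_simp
      linarith

end Regions
section Selection

open Finset

variable {nx ny nξ m : ℕ}

lemma cont_inf' {β : Type*} (s : Finset β) (hs : s.Nonempty) (f : β → (Fin nξ → ℝ) → ℝ)
    (hf : ∀ b, Continuous (f b)) :
    Continuous fun ξ => s.inf' hs (fun b => f b ξ) := by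
  refine Finset.Nonempty.cons_induction
    (motive := fun s hs => Continuous fun ξ => s.inf' hs fun b => f b ξ)
    (fun a => by simpa using hf a) ?_ hs
  intro a s ha hs IH
  have he : (fun ξ => (Finset.cons a s ha).inf' (Finset.cons_nonempty ha) (fun b => f b ξ))
      = fun ξ => min (f a ξ) (s.inf' hs fun b => f b ξ) := by
    funext ξ
    rw [Finset.inf'_cons]
  rw [he]
  exact (hf a).min IH

lemma fES_of_feas {g : (Fin nx → ℝ) → (Fin ny → ℝ) → (Fin nξ → ℝ) → ℝ}
    {hv : Fin m → ℤ} {H : Matrix (Fin m) (Fin nξ) ℤ} {A0 : Matrix (Fin m) (Fin nx) ℤ}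
    {Ai : Fin nξ → Matrix (Fin m) (Fin nx) ℤ} {B0 : Matrix (Fin m) (Fin ny) ℤ}
    {x : Fin nx → ℝ} {y : Fin ny → ℝ} {ξ : Fin nξ → ℝ}
    (h : FeasS hv H A0 Ai B0 x y ξ) :
    fES g hv H A0 Ai B0 x y ξ = ((g x y ξ : ℝ) : EReal) := by
  unfold fES; rw [if_pos h]

lemma fES_of_not_feas {g : (Fin nx → ℝ) → (Fin ny → ℝ) → (Fin nξ → ℝ) → ℝ}
    {hv : Fin m → ℤ} {H : Matrix (Fin m) (Fin nξ) ℤ} {A0 : Matrix (Fin m) (Fin nx) ℤ}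
    {Ai : Fin nξ → Matrix (Fin m) (Fin nx) ℤ} {B0 : Matrix (Fin m) (Fin ny) ℤ}
    {x : Fin nx → ℝ} {y : Fin ny → ℝ} {ξ : Fin nξ → ℝ}
    (h : ¬ FeasS hv H A0 Ai B0 x y ξ) :
    fES g hv H A0 Ai B0 x y ξ = ⊤ := by
  unfold fES; rw [if_neg h]

lemma feas_closure {hv : Fin m → ℤ} {H : Matrix (Fin m) (Fin nξ) ℤ}
    {A0 : Matrix (Fin m) (Fin nx) ℤ} {Ai : Fin nξ → Matrix (Fin m) (Fin nx) ℤ}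
    {B0 : Matrix (Fin m) (Fin ny) ℤ} {x : Fin nx → ℝ} {y : Fin ny → ℝ}
    {D : Set (Fin nξ → ℝ)} (h : ∀ ξ ∈ D, FeasS hv H A0 Ai B0 x y ξ) :
    ∀ ξ ∈ closure D, FeasS hv H A0 Ai B0 x y ξ :=
  closure_minimal h (feasS_closed hv H A0 Ai B0 x y)

lemma worst_le_kVal {Eξ Ey : Type*} (U : Set Eξ) (S : Set Ey) (F : Ey → Eξ → EReal) (k : ℕ) :
    worstValE U S F ≤ kValE U S F k := by
  refine le_iInf₂ fun yv hyv => ?_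
  refine iSup₂_mono fun ξ _ => ?_
  refine iInf_le_iInf_of_subset ?_
  rintro _ ⟨i, rfl⟩
  exact hyv i

lemma kVal_le_of_select {Eξ Ey : Type*} (U : Set Eξ) (S : Set Ey) (F : Ey → Eξ → EReal)
    (k : ℕ) (v : EReal) (G : Finset Ey) (hGsub : ↑G ⊆ S) (hGne : G.Nonempty)
    (hGcard : G.card ≤ k) (hGp : ∀ ξ ∈ U, (⨅ y ∈ (↑G : Set Ey), F y ξ) ≤ v) :
    kValE U S F k ≤ v := by
  classical
  obtain ⟨y₀, hy₀⟩ := hGne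
  set l := G.toList with hl
  have hlen : l.length = G.card := Finset.length_toList G
  set yv : Fin k → Ey := fun i =>
    if h : (i : ℕ) < l.length then l.get ⟨i, h⟩ else y₀ with hyv
  have hyvG : ∀ i, yv i ∈ G := by
    intro i
    have he : yv i = if h : (i : ℕ) < l.length then l.get ⟨i, h⟩ else y₀ := rfl
    rw [he]
    split
    · exact Finset.mem_toList.mp (List.get_mem l _)
    · exact hy₀
  have hrange : Set.range yv = ↑G := by
    apply Set.eq_of_subset_of_subset
    · rintro _ ⟨i, rfl⟩; exact hyvG i
    · intro z hz
      obtain ⟨n, hn⟩ := List.mem_iff_get.mp (Finset.mem_toList.mpr hz)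
      have hnk : (n : ℕ) < k := lt_of_lt_of_le (hlen ▸ n.2) hGcard
      refine ⟨⟨n, hnk⟩, ?_⟩
      have he : yv ⟨n, hnk⟩ = if h : ((⟨(n:ℕ), hnk⟩ : Fin k) : ℕ) < l.length then
          l.get ⟨((⟨(n:ℕ), hnk⟩ : Fin k) : ℕ), h⟩ else y₀ := rfl
      rw [he, dif_pos (show ((⟨(n:ℕ), hnk⟩ : Fin k) : ℕ) < l.length from n.2)]
      exact (congrArg l.get (Fin.ext rfl)).trans hn
  have hmem : yv ∈ {y : Fin k → Ey | ∀ i, y i ∈ S} := fun i => hGsub (hyvG i)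
  calc kValE U S F k ≤ worstValE U (Set.range yv) F := iInf₂_le yv hmem
    _ = ⨆ ξ ∈ U, ⨅ y ∈ (↑G : Set Ey), F y ξ := by unfold worstValE; rw [hrange]
    _ ≤ v := iSup₂_le hGp

lemma worst_top_of_infeas {g : (Fin nx → ℝ) → (Fin ny → ℝ) → (Fin nξ → ℝ) → ℝ}
    {hv : Fin m → ℤ} {H : Matrix (Fin m) (Fin nξ) ℤ} {A0 : Matrix (Fin m) (Fin nx) ℤ}
    {Ai : Fin nξ → Matrix (Fin m) (Fin nx) ℤ} {B0 : Matrix (Fin m) (Fin ny) ℤ}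
    {Yx : (Fin nx → ℝ) → Set (Fin ny → ℝ)} {U : Set (Fin nξ → ℝ)} {x : Fin nx → ℝ}
    (hnf : ¬ Feasible2RO hv H A0 Ai B0 Yx U x) :
    worstValE U (Yx x) (fES g hv H A0 Ai B0 x) = ⊤ := by
  unfold Feasible2RO at hnf
  push_neg at hnf
  obtain ⟨ξ, hξU, hξ⟩ := hnf
  apply top_le_iff.mp
  refine le_trans ?_ (le_iSup₂ (f := fun (ξ : Fin nξ → ℝ) (_ : ξ ∈ U) =>
    ⨅ y ∈ Yx x, fES g hv H A0 Ai B0 x y ξ) ξ hξU)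
  refine le_iInf₂ fun y hy => ?_
  rw [fES_of_not_feas (hξ y hy)]

/-- Helly-based selection of at most `nξ+1` policies on one region. -/
lemma regsel {g : (Fin nx → ℝ) → (Fin ny → ℝ) → (Fin nξ → ℝ) → ℝ}
    {hv : Fin m → ℤ} {H : Matrix (Fin m) (Fin nξ) ℤ} {A0 : Matrix (Fin m) (Fin nx) ℤ}
    {Ai : Fin nξ → Matrix (Fin m) (Fin nx) ℤ} {B0 : Matrix (Fin m) (Fin ny) ℤ}
    {Yx : (Fin nx → ℝ) → Set (Fin ny → ℝ)} {U : Set (Fin nξ → ℝ)}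
    {Y : Set (Fin ny → ℝ)} (hYfin : Y.Finite)
    {x : Fin nx → ℝ} (hsub : Yx x ⊆ Y) (hYxne : (Yx x).Nonempty)
    (hxfeas : Feasible2RO hv H A0 Ai B0 Yx U x)
    (hUcomp : IsCompact U)
    (hconc : ∀ y ∈ Yx x, ConcaveOn ℝ U (fun ξ => g x y ξ))
    (hcont : ∀ y, Continuous (fun ξ => g x y ξ))
    (D : Set (Fin nξ → ℝ)) (hDU : D ⊆ U) (hDconv : Convex ℝ D)
    (hDstab : RecourseStableS hv H A0 Ai B0 Yx x D) :
    ∃ G : Finset (Fin ny → ℝ), ↑G ⊆ Yx x ∧ G.Nonempty ∧ G.card ≤ nξ + 1 ∧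
      ∀ ξ ∈ closure D, (⨅ y ∈ (↑G : Set (Fin ny → ℝ)), fES g hv H A0 Ai B0 x y ξ)
        ≤ worstValE U (Yx x) (fES g hv H A0 Ai B0 x) := by
  classical
  set F := fES g hv H A0 Ai B0 x with hF
  set v := worstValE U (Yx x) F with hv'
  rcases Set.eq_empty_or_nonempty D with hD | ⟨ξ₀, hξ₀⟩
  · obtain ⟨y₀, hy₀⟩ := hYxne
    refine ⟨{y₀}, by simpa using hy₀, Finset.singleton_nonempty _, by simp, ?_⟩
    intro ξ hξ
    rw [hD, closure_empty] at hξ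
    exact absurd hξ (Set.notMem_empty ξ)
  · set Ftset : Set (Fin ny → ℝ) := {y ∈ Yx x | ∀ ξ ∈ D, FeasS hv H A0 Ai B0 x y ξ}
      with hFtset
    have hFtfin : Ftset.Finite := (hYfin.subset hsub).subset (Set.sep_subset _ _)
    set FtF := hFtfin.toFinset with hFtF
    have hFtne : FtF.Nonempty := by
      obtain ⟨y₁, hy₁, hfeas₁⟩ := hxfeas ξ₀ (hDU hξ₀)
      rcases hDstab y₁ hy₁ with hall | hnone
      · exact ⟨y₁, hFtfin.mem_toFinset.mpr ⟨hy₁, hall⟩⟩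
      · exact absurd hfeas₁ (hnone ξ₀ hξ₀)
    set h : (Fin nξ → ℝ) → ℝ := fun ξ => FtF.inf' hFtne (fun y => g x y ξ) with hh
    have hconth : Continuous h := cont_inf' FtF hFtne _ (fun y => hcont y)
    have hclsub : closure D ⊆ U := closure_minimal hDU hUcomp.isClosed
    have hclcomp : IsCompact (closure D) :=
      IsCompact.of_isClosed_subset hUcomp isClosed_closure hclsub
    have hclne : (closure D).Nonempty := ⟨ξ₀, subset_closure hξ₀⟩
    obtain ⟨ξs, hξs, hmax⟩ := hclcomp.exists_isMaxOn hclne hconth.continuousOn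
    have hFtfeas : ∀ y ∈ FtF, ∀ ξ ∈ closure D, FeasS hv H A0 Ai B0 x y ξ := by
      intro y hy
      exact feas_closure (hFtfin.mem_toFinset.mp hy).2
    have hFtsub : ∀ y ∈ FtF, y ∈ Yx x := fun y hy => (hFtfin.mem_toFinset.mp hy).1
    have hDval : ∀ ξ ∈ D, ((h ξ : ℝ) : EReal) ≤ v := by
      intro ξ hξ
      refine le_trans ?_ (le_iSup₂ (f := fun (ξ : Fin nξ → ℝ) (_ : ξ ∈ U) =>
        ⨅ y ∈ Yx x, F y ξ) ξ (hDU hξ))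
      refine le_iInf₂ fun y hy => ?_
      rcases hDstab y hy with hall | hnone
      · rw [hF, fES_of_feas (hall ξ hξ)]
        have : h ξ ≤ g x y ξ := Finset.inf'_le _ (hFtfin.mem_toFinset.mpr ⟨hy, hall⟩)
        exact_mod_cast this
      · rw [hF, fES_of_not_feas (hnone ξ hξ)]
        exact le_top
    have hξsval : ((h ξs : ℝ) : EReal) ≤ v := by
      obtain ⟨seq, hseqD, hseqlim⟩ := mem_closure_iff_seq_limit.mp hξs
      have htend : Filter.Tendsto (fun n => ((h (seq n) : ℝ) : EReal))
          Filter.atTop (nhds ((h ξs : ℝ) : EReal)) :=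
        EReal.tendsto_coe.mpr ((hconth.tendsto ξs).comp hseqlim)
      exact le_of_tendsto htend
        (Filter.Eventually.of_forall fun n => hDval (seq n) (hseqD n))
    -- Helly selection
    have hkey : ∃ G : Finset (Fin ny → ℝ), G ⊆ FtF ∧ G.Nonempty ∧ G.card ≤ nξ + 1 ∧
        ∀ ξ ∈ closure D, ∃ y ∈ G, g x y ξ ≤ h ξs := by
      by_contra hcon
      push_neg at hcon
      have hfr : Module.finrank ℝ (Fin nξ → ℝ) = nξ := by simp
      have hhelly := Convex.helly_theorem' (𝕜 := ℝ)
        (F := fun y => {ξ ∈ closure D | h ξs < g x y ξ}) (s := FtF)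
        (fun y hy => ((hconc y (hFtsub y hy)).subset hclsub hDconv.closure).convex_gt _)
        ?_
      · obtain ⟨ξh, hξh⟩ := hhelly
        have hξhm := Set.mem_iInter₂.mp hξh
        have hFtne2 := hFtne
        obtain ⟨y₁, hy₁F⟩ := hFtne2
        have hξhD : ξh ∈ closure D := (hξhm y₁ hy₁F).1
        have h1 : h ξs < h ξh := by
          show h ξs < FtF.inf' hFtne (fun y => g x y ξh)
          rw [Finset.lt_inf'_iff]
          intro y hy
          exact (hξhm y hy).2
        have h2 : h ξh ≤ h ξs := hmax hξhD
        linarith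
      · intro I hIsub hIcard
        rcases I.eq_empty_or_nonempty with rfl | hIne
        · simp only [Finset.notMem_empty, Set.iInter_of_empty, Set.iInter_univ]
          exact Set.univ_nonempty
        · obtain ⟨ξI, hξID, hξIgt⟩ := hcon I hIsub hIne (by rw [hfr] at hIcard; exact hIcard)
          refine ⟨ξI, Set.mem_iInter₂.mpr fun y hy => ⟨hξID, ?_⟩⟩
          first
          | exact hξIgt y hy
          | exact not_le.mp (hξIgt y hy)
    obtain ⟨G, hGF, hGne, hGcard, hGp⟩ := hkey
    refine ⟨G, fun y hy => hFtsub y (hGF hy), hGne, hGcard, ?_⟩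
    intro ξ hξ
    obtain ⟨y, hyG, hyle⟩ := hGp ξ hξ
    refine le_trans (iInf₂_le y hyG) ?_
    rw [hF, fES_of_feas (hFtfeas y (hGF hyG) ξ hξ)]
    refine le_trans ?_ hξsval
    exact_mod_cast hyle

/-- Selection of a single policy on one region when `g` does not depend on `ξ`. -/
lemma regsel_const {g : (Fin nx → ℝ) → (Fin ny → ℝ) → (Fin nξ → ℝ) → ℝ}
    {hv : Fin m → ℤ} {H : Matrix (Fin m) (Fin nξ) ℤ} {A0 : Matrix (Fin m) (Fin nx) ℤ}
    {Ai : Fin nξ → Matrix (Fin m) (Fin nx) ℤ} {B0 : Matrix (Fin m) (Fin ny) ℤ}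
    {Yx : (Fin nx → ℝ) → Set (Fin ny → ℝ)} {U : Set (Fin nξ → ℝ)}
    {Y : Set (Fin ny → ℝ)} (hYfin : Y.Finite)
    {x : Fin nx → ℝ} (hsub : Yx x ⊆ Y) (hYxne : (Yx x).Nonempty)
    (hxfeas : Feasible2RO hv H A0 Ai B0 Yx U x)
    (hgfree : ∀ x' y ξ ξ', g x' y ξ = g x' y ξ')
    (D : Set (Fin nξ → ℝ)) (hDU : D ⊆ U)
    (hDstab : RecourseStableS hv H A0 Ai B0 Yx x D) :
    ∃ G : Finset (Fin ny → ℝ), ↑G ⊆ Yx x ∧ G.Nonempty ∧ G.card ≤ 1 ∧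
      ∀ ξ ∈ closure D, (⨅ y ∈ (↑G : Set (Fin ny → ℝ)), fES g hv H A0 Ai B0 x y ξ)
        ≤ worstValE U (Yx x) (fES g hv H A0 Ai B0 x) := by
  classical
  set F := fES g hv H A0 Ai B0 x with hF
  rcases Set.eq_empty_or_nonempty D with hD | ⟨ξ₀, hξ₀⟩
  · obtain ⟨y₀, hy₀⟩ := hYxne
    refine ⟨{y₀}, by simpa using hy₀, Finset.singleton_nonempty _, by simp, ?_⟩
    intro ξ hξ
    rw [hD, closure_empty] at hξ
    exact absurd hξ (Set.notMem_empty ξ)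
  · set Ftset : Set (Fin ny → ℝ) := {y ∈ Yx x | ∀ ξ ∈ D, FeasS hv H A0 Ai B0 x y ξ}
      with hFtset
    have hFtfin : Ftset.Finite := (hYfin.subset hsub).subset (Set.sep_subset _ _)
    set FtF := hFtfin.toFinset with hFtF
    have hFtne : FtF.Nonempty := by
      obtain ⟨y₁, hy₁, hfeas₁⟩ := hxfeas ξ₀ (hDU hξ₀)
      rcases hDstab y₁ hy₁ with hall | hnone
      · exact ⟨y₁, hFtfin.mem_toFinset.mpr ⟨hy₁, hall⟩⟩
      · exact absurd hfeas₁ (hnone ξ₀ hξ₀)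
    obtain ⟨yt, hytF, hytmin⟩ := FtF.exists_min_image (fun y => g x y ξ₀) hFtne
    have hytY : yt ∈ Yx x := (hFtfin.mem_toFinset.mp hytF).1
    have hytfeas := feas_closure (hFtfin.mem_toFinset.mp hytF).2
    refine ⟨{yt}, by simpa using hytY, Finset.singleton_nonempty _, by simp, ?_⟩
    intro ξ hξ
    have hv0 : ((g x yt ξ₀ : ℝ) : EReal) ≤ worstValE U (Yx x) F := by
      refine le_trans ?_ (le_iSup₂ (f := fun (ζ : Fin nξ → ℝ) (_ : ζ ∈ U) =>
        ⨅ y ∈ Yx x, F y ζ) ξ₀ (hDU hξ₀))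
      refine le_iInf₂ fun y hy => ?_
      rcases hDstab y hy with hall | hnone
      · rw [hF, fES_of_feas (hall ξ₀ hξ₀)]
        exact_mod_cast hytmin y (hFtfin.mem_toFinset.mpr ⟨hy, hall⟩)
      · rw [hF, fES_of_not_feas (hnone ξ₀ hξ₀)]
        exact le_top
    refine le_trans (iInf₂_le yt (by simp)) ?_
    rw [hF, fES_of_feas (hytfeas ξ hξ), hgfree x yt ξ ξ₀]
    exact hv0

end Selection
section Assembly

open Finset

variable {nx ny nξ m : ℕ}

/-- Combine per-region selections into a global selection. -/
lemma select_global {g : (Fin nx → ℝ) → (Fin ny → ℝ) → (Fin nξ → ℝ) → ℝ}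
    {hv : Fin m → ℤ} {H : Matrix (Fin m) (Fin nξ) ℤ} {A0 : Matrix (Fin m) (Fin nx) ℤ}
    {Ai : Fin nξ → Matrix (Fin m) (Fin nx) ℤ} {B0 : Matrix (Fin m) (Fin ny) ℤ}
    {Yx : (Fin nx → ℝ) → Set (Fin ny → ℝ)} {U : Set (Fin nξ → ℝ)}
    {x : Fin nx → ℝ} (hUne : U.Nonempty)
    {R : ℕ} {D : Fin R → Set (Fin nξ → ℝ)}
    (hcover : (⋃ t, closure (D t)) = U) (b : ℕ)
    (per : ∀ t, ∃ G : Finset (Fin ny → ℝ), ↑G ⊆ Yx x ∧ G.Nonempty ∧ G.card ≤ b ∧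
      ∀ ξ ∈ closure (D t), (⨅ y ∈ (↑G : Set (Fin ny → ℝ)), fES g hv H A0 Ai B0 x y ξ)
        ≤ worstValE U (Yx x) (fES g hv H A0 Ai B0 x)) :
    ∃ G : Finset (Fin ny → ℝ), ↑G ⊆ Yx x ∧ G.Nonempty ∧ G.card ≤ R * b ∧
      ∀ ξ ∈ U, (⨅ y ∈ (↑G : Set (Fin ny → ℝ)), fES g hv H A0 Ai B0 x y ξ)
        ≤ worstValE U (Yx x) (fES g hv H A0 Ai B0 x) := by
  classical
  choose Gt hGtsub hGtne hGtcard hGtp using per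
  have hR : 0 < R := by
    rcases Nat.eq_zero_or_pos R with rfl | h
    · exfalso
      obtain ⟨ξ, hξ⟩ := hUne
      rw [← hcover] at hξ
      obtain ⟨s, ⟨t, rfl⟩, -⟩ := hξ
      exact absurd t.2 (by simp)
    · exact h
  set G := Finset.univ.biUnion Gt with hG
  refine ⟨G, ?_, ?_, ?_, ?_⟩
  · intro y hy
    obtain ⟨t, -, hyt⟩ := Finset.mem_biUnion.mp hy
    exact hGtsub t hyt
  · obtain ⟨y, hy⟩ := hGtne ⟨0, hR⟩
    exact ⟨y, Finset.mem_biUnion.mpr ⟨⟨0, hR⟩, Finset.mem_univ _, hy⟩⟩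
  · calc G.card ≤ ∑ t, (Gt t).card := Finset.card_biUnion_le
      _ ≤ Finset.univ.card * b := Finset.sum_le_card_nsmul _ _ b (fun t _ => hGtcard t)
      _ = R * b := by rw [Finset.card_univ, Fintype.card_fin]
  · intro ξ hξ
    have hξ' : ξ ∈ ⋃ t, closure (D t) := by rw [hcover]; exact hξ
    obtain ⟨s, ⟨t, rfl⟩, hξt⟩ := hξ'
    refine le_trans ?_ (hGtp t ξ hξt)
    refine le_iInf₂ fun y hy => ?_
    exact iInf₂_le y (by exact Finset.mem_biUnion.mpr ⟨t, Finset.mem_univ _, hy⟩)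

/-- The pointwise equality of the `k`-adaptability value and the two-stage value. -/
lemma pointwise_eq (hm : 0 < m)
    {g : (Fin nx → ℝ) → (Fin ny → ℝ) → (Fin nξ → ℝ) → ℝ}
    {hv : Fin m → ℤ} {H : Matrix (Fin m) (Fin nξ) ℤ} {A0 : Matrix (Fin m) (Fin nx) ℤ}
    {Ai : Fin nξ → Matrix (Fin m) (Fin nx) ℤ} {B0 : Matrix (Fin m) (Fin ny) ℤ}
    {Yx : (Fin nx → ℝ) → Set (Fin ny → ℝ)} {U : Set (Fin nξ → ℝ)}
    {Y : Set (Fin ny → ℝ)} (hYfin : Y.Finite)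
    (hUcomp : IsCompact U) (hUconv : Convex ℝ U) (hUne : U.Nonempty)
    {x : Fin nx → ℝ} (hsub : Yx x ⊆ Y) (hYxne : (Yx x).Nonempty)
    (hconc : ∀ y ∈ Yx x, ConcaveOn ℝ U (fun ξ => g x y ξ))
    (hcont : ∀ y, Continuous (fun ξ => g x y ξ))
    (η ω : ℕ)
    (hηx : Feasible2RO hv H A0 Ai B0 Yx U x → (HypSet hv H A0 Ai B0 Yx U x).ncard ≤ η)
    (hωx : (matA H Ai x).rank ≤ ω)
    (k : ℕ) (hk : min Y.ncard ((nξ + 1) * fB η ω) ≤ k) :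
    kValE U (Yx x) (fES g hv H A0 Ai B0 x) k = worstValE U (Yx x) (fES g hv H A0 Ai B0 x) := by
  classical
  refine le_antisymm ?_ (worst_le_kVal _ _ _ _)
  rcases min_le_iff.mp hk with hY | hB
  · -- enough policies to enumerate all of Y
    set Gfin := (hYfin.subset hsub).toFinset with hGfin
    refine kVal_le_of_select U (Yx x) _ k _ Gfin ?_ ?_ ?_ ?_
    · intro y hy; exact ((hYfin.subset hsub).mem_toFinset).mp hy
    · obtain ⟨y₀, hy₀⟩ := hYxne
      exact ⟨y₀, ((hYfin.subset hsub).mem_toFinset).mpr hy₀⟩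
    · calc Gfin.card = (Yx x).ncard := (Set.ncard_eq_toFinset_card _ _).symm
        _ ≤ Y.ncard := Set.ncard_le_ncard hsub hYfin
        _ ≤ k := hY
    · intro ξ hξ
      have hGYx : (↑Gfin : Set (Fin ny → ℝ)) = Yx x := (hYfin.subset hsub).coe_toFinset
      rw [hGYx]
      exact le_iSup₂ (f := fun (ζ : Fin nξ → ℝ) (_ : ζ ∈ U) =>
        ⨅ y ∈ Yx x, fES g hv H A0 Ai B0 x y ζ) ξ hξ
  · by_cases hfeas : Feasible2RO hv H A0 Ai B0 Yx U x
    · obtain ⟨R, D, hDp, hcover, hR⟩ := REG hm hv H A0 Ai B0 Yx U hUcomp hUconv hUne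
        Y hYfin x hsub η ω (hηx hfeas) hωx
      have per : ∀ t, ∃ G : Finset (Fin ny → ℝ), ↑G ⊆ Yx x ∧ G.Nonempty ∧
          G.card ≤ nξ + 1 ∧ ∀ ξ ∈ closure (D t),
            (⨅ y ∈ (↑G : Set (Fin ny → ℝ)), fES g hv H A0 Ai B0 x y ξ)
              ≤ worstValE U (Yx x) (fES g hv H A0 Ai B0 x) := by
        intro t
        exact regsel hYfin hsub hYxne hfeas hUcomp hconc hcont (D t) (hDp t).1 (hDp t).2.1
          (hDp t).2.2
      obtain ⟨G, hGsub, hGne, hGcard, hGp⟩ := select_global hUne hcover (nξ + 1) per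
      refine kVal_le_of_select U (Yx x) _ k _ G hGsub hGne ?_ hGp
      calc G.card ≤ R * (nξ + 1) := hGcard
        _ ≤ fB η ω * (nξ + 1) := Nat.mul_le_mul_right _ hR
        _ = (nξ + 1) * fB η ω := Nat.mul_comm _ _
        _ ≤ k := hB
    · rw [worst_top_of_infeas hfeas]
      exact le_top

/-- Pointwise equality in the `ξ`-free case. -/
lemma pointwise_eq_const (hm : 0 < m)
    {g : (Fin nx → ℝ) → (Fin ny → ℝ) → (Fin nξ → ℝ) → ℝ}
    {hv : Fin m → ℤ} {H : Matrix (Fin m) (Fin nξ) ℤ} {A0 : Matrix (Fin m) (Fin nx) ℤ}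
    {Ai : Fin nξ → Matrix (Fin m) (Fin nx) ℤ} {B0 : Matrix (Fin m) (Fin ny) ℤ}
    {Yx : (Fin nx → ℝ) → Set (Fin ny → ℝ)} {U : Set (Fin nξ → ℝ)}
    {Y : Set (Fin ny → ℝ)} (hYfin : Y.Finite)
    (hUcomp : IsCompact U) (hUconv : Convex ℝ U) (hUne : U.Nonempty)
    {x : Fin nx → ℝ} (hsub : Yx x ⊆ Y) (hYxne : (Yx x).Nonempty)
    (hgfree : ∀ x' y ξ ξ', g x' y ξ = g x' y ξ')
    (η ω : ℕ)
    (hηx : Feasible2RO hv H A0 Ai B0 Yx U x → (HypSet hv H A0 Ai B0 Yx U x).ncard ≤ η)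
    (hωx : (matA H Ai x).rank ≤ ω)
    (k : ℕ) (hk : min Y.ncard (fB η ω) ≤ k) :
    kValE U (Yx x) (fES g hv H A0 Ai B0 x) k = worstValE U (Yx x) (fES g hv H A0 Ai B0 x) := by
  classical
  refine le_antisymm ?_ (worst_le_kVal _ _ _ _)
  rcases min_le_iff.mp hk with hY | hB
  · set Gfin := (hYfin.subset hsub).toFinset with hGfin
    refine kVal_le_of_select U (Yx x) _ k _ Gfin ?_ ?_ ?_ ?_
    · intro y hy; exact ((hYfin.subset hsub).mem_toFinset).mp hy
    · obtain ⟨y₀, hy₀⟩ := hYxne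
      exact ⟨y₀, ((hYfin.subset hsub).mem_toFinset).mpr hy₀⟩
    · calc Gfin.card = (Yx x).ncard := (Set.ncard_eq_toFinset_card _ _).symm
        _ ≤ Y.ncard := Set.ncard_le_ncard hsub hYfin
        _ ≤ k := hY
    · intro ξ hξ
      have hGYx : (↑Gfin : Set (Fin ny → ℝ)) = Yx x := (hYfin.subset hsub).coe_toFinset
      rw [hGYx]
      exact le_iSup₂ (f := fun (ζ : Fin nξ → ℝ) (_ : ζ ∈ U) =>
        ⨅ y ∈ Yx x, fES g hv H A0 Ai B0 x y ζ) ξ hξ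
  · by_cases hfeas : Feasible2RO hv H A0 Ai B0 Yx U x
    · obtain ⟨R, D, hDp, hcover, hR⟩ := REG hm hv H A0 Ai B0 Yx U hUcomp hUconv hUne
        Y hYfin x hsub η ω (hηx hfeas) hωx
      have per : ∀ t, ∃ G : Finset (Fin ny → ℝ), ↑G ⊆ Yx x ∧ G.Nonempty ∧
          G.card ≤ 1 ∧ ∀ ξ ∈ closure (D t),
            (⨅ y ∈ (↑G : Set (Fin ny → ℝ)), fES g hv H A0 Ai B0 x y ξ)
              ≤ worstValE U (Yx x) (fES g hv H A0 Ai B0 x) := by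
        intro t
        exact regsel_const hYfin hsub hYxne hfeas hgfree (D t) (hDp t).1 (hDp t).2.2
      obtain ⟨G, hGsub, hGne, hGcard, hGp⟩ := select_global hUne hcover 1 per
      refine kVal_le_of_select U (Yx x) _ k _ G hGsub hGne ?_ hGp
      calc G.card ≤ R * 1 := hGcard
        _ = R := Nat.mul_one _
        _ ≤ fB η ω := hR
        _ ≤ k := hB
    · rw [worst_top_of_infeas hfeas]
      exact le_top

end Assembly
/-- Under fixed recourse, with `ω` bounding the rank of `A(x)` over `X`
(`ω ≤ min{m, n_ξ}`): for every feasible `x` there is a cover of `U` by the closures of at most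
`Σ_{i=0}^{ω} C(η,i)` convex recourse-stable regions; consequently
`k ≥ min{|Y|, (n_ξ+1)·Σ_{i=0}^{ω} C(η,i)}` policies suffice for `k`-adaptability to have the
two-stage robust optimal value and optimal first-stage solutions, and if `g` does not depend on
`ξ` then `k ≥ min{|Y|, Σ_{i=0}^{ω} C(η,i)}` suffices. -/
theorem stmt_12 (nx ny nξ m : ℕ) (hnx : 0 < nx) (hny : 0 < ny) (hnξ : 0 < nξ) (hm0 : 0 < m)
    (X : Set (Fin nx → ℝ)) (hXcomp : IsCompact X) (hXne : X.Nonempty)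
    (Y : Set (Fin ny → ℝ)) (hYfin : Y.Finite) (hYne : Y.Nonempty)
    (hYint : ∀ y ∈ Y, ∀ i, ∃ z : ℤ, y i = (z : ℝ))
    (Yx : (Fin nx → ℝ) → Set (Fin ny → ℝ))
    (hYxsub : ∀ x ∈ X, Yx x ⊆ Y) (hYxne : ∀ x ∈ X, (Yx x).Nonempty)
    (U : Set (Fin nξ → ℝ)) (hUcomp : IsCompact U) (hUconv : Convex ℝ U) (hUne : U.Nonempty)
    (g : (Fin nx → ℝ) → (Fin ny → ℝ) → (Fin nξ → ℝ) → ℝ)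
    (hgcont : Continuous fun p : (Fin nx → ℝ) × (Fin ny → ℝ) × (Fin nξ → ℝ) =>
      g p.1 p.2.1 p.2.2)
    (hgconc : ∀ x ∈ X, ∀ y ∈ Y, ConcaveOn ℝ U (g x y))
    (hv : Fin m → ℤ) (H : Matrix (Fin m) (Fin nξ) ℤ)
    (A0 : Matrix (Fin m) (Fin nx) ℤ) (Ai : Fin nξ → Matrix (Fin m) (Fin nx) ℤ)
    (B0 : Matrix (Fin m) (Fin ny) ℤ)
    (hfeas : ∃ x ∈ X, Feasible2RO hv H A0 Ai B0 Yx U x)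
    (η : ℕ) (hη1 : 1 ≤ η)
    (hηb : ∀ x ∈ X, Feasible2RO hv H A0 Ai B0 Yx U x →
      (HypSet hv H A0 Ai B0 Yx U x).ncard ≤ η)
    (ω : ℕ) (hω : ∀ x ∈ X, (matA H Ai x).rank ≤ ω) (hωle : ω ≤ min m nξ) :
    (∀ x ∈ X, Feasible2RO hv H A0 Ai B0 Yx U x →
      ∃ (R : ℕ) (D : Fin R → Set (Fin nξ → ℝ)),
        (∀ t, D t ⊆ U ∧ Convex ℝ (D t) ∧
          RecourseStableS hv H A0 Ai B0 Yx x (D t)) ∧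
        (⋃ t, closure (D t)) = U ∧
        R ≤ ∑ i ∈ Finset.range (ω + 1), Nat.choose η i) ∧
    (∀ k : ℕ,
      min Y.ncard ((nξ + 1) * ∑ i ∈ Finset.range (ω + 1), Nat.choose η i) ≤ k →
      (⨅ x ∈ X, kValE U (Yx x) (fES g hv H A0 Ai B0 x) k) =
        (⨅ x ∈ X, worstValE U (Yx x) (fES g hv H A0 Ai B0 x)) ∧
      (∀ x ∈ X,
        kValE U (Yx x) (fES g hv H A0 Ai B0 x) k =
          (⨅ x' ∈ X, kValE U (Yx x') (fES g hv H A0 Ai B0 x') k) ↔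
        worstValE U (Yx x) (fES g hv H A0 Ai B0 x) =
          (⨅ x' ∈ X, worstValE U (Yx x') (fES g hv H A0 Ai B0 x')))) ∧
    ((∀ x y ξ ξ', g x y ξ = g x y ξ') → ∀ k : ℕ,
      min Y.ncard (∑ i ∈ Finset.range (ω + 1), Nat.choose η i) ≤ k →
      (⨅ x ∈ X, kValE U (Yx x) (fES g hv H A0 Ai B0 x) k) =
        (⨅ x ∈ X, worstValE U (Yx x) (fES g hv H A0 Ai B0 x)) ∧
      (∀ x ∈ X,
        kValE U (Yx x) (fES g hv H A0 Ai B0 x) k =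
          (⨅ x' ∈ X, kValE U (Yx x') (fES g hv H A0 Ai B0 x') k) ↔
        worstValE U (Yx x) (fES g hv H A0 Ai B0 x) =
          (⨅ x' ∈ X, worstValE U (Yx x') (fES g hv H A0 Ai B0 x')))) := by
  classical
  have hcont : ∀ (x : Fin nx → ℝ) (y : Fin ny → ℝ),
      Continuous (fun ξ => g x y ξ) := by
    intro x y
    have : (fun ξ : Fin nξ → ℝ => g x y ξ)
        = (fun p : (Fin nx → ℝ) × (Fin ny → ℝ) × (Fin nξ → ℝ) => g p.1 p.2.1 p.2.2)
          ∘ (fun ξ => (x, (y, ξ))) := rfl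
    rw [this]
    exact hgcont.comp (continuous_const.prodMk (continuous_const.prodMk continuous_id))
  have hpt : ∀ (k : ℕ), min Y.ncard ((nξ + 1) * fB η ω) ≤ k → ∀ x ∈ X,
      kValE U (Yx x) (fES g hv H A0 Ai B0 x) k
        = worstValE U (Yx x) (fES g hv H A0 Ai B0 x) := by
    intro k hk x hx
    exact pointwise_eq hm0 hYfin hUcomp hUconv hUne (hYxsub x hx) (hYxne x hx)
      (fun y hy => hgconc x hx y (hYxsub x hx hy)) (hcont x) η ω
      (fun hfe => hηb x hx hfe) (hω x hx) k hk
  refine ⟨?_, ?_, ?_⟩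
  · -- Part 1 : the cover
    intro x hx hfeas
    obtain ⟨R, D, hDp, hcover, hR⟩ := REG hm0 hv H A0 Ai B0 Yx U hUcomp hUconv hUne
      Y hYfin x (hYxsub x hx) η ω (hηb x hx hfeas) (hω x hx)
    exact ⟨R, D, hDp, hcover, hR⟩
  · -- Part 2 : general k-adaptability
    intro k hk
    have hpk := hpt k hk
    have hcongr : (⨅ x ∈ X, kValE U (Yx x) (fES g hv H A0 Ai B0 x) k)
        = ⨅ x ∈ X, worstValE U (Yx x) (fES g hv H A0 Ai B0 x) :=
      iInf_congr fun x => iInf_congr fun hx => hpk x hx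
    refine ⟨hcongr, ?_⟩
    intro x hx
    rw [hpk x hx, hcongr]
  · -- Part 3 : the ξ-free case
    intro hgfree k hk
    have hpk : ∀ x ∈ X, kValE U (Yx x) (fES g hv H A0 Ai B0 x) k
        = worstValE U (Yx x) (fES g hv H A0 Ai B0 x) := by
      intro x hx
      exact pointwise_eq_const hm0 hYfin hUcomp hUconv hUne (hYxsub x hx) (hYxne x hx)
        hgfree η ω (fun hfe => hηb x hx hfe) (hω x hx) k hk
    have hcongr : (⨅ x ∈ X, kValE U (Yx x) (fES g hv H A0 Ai B0 x) k)
        = ⨅ x ∈ X, worstValE U (Yx x) (fES g hv H A0 Ai B0 x) :=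
      iInf_congr fun x => iInf_congr fun hx => hpk x hx
    refine ⟨hcongr, ?_⟩
    intro x hx
    rw [hpk x hx, hcongr]
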